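/- arXiv:2210.03617 — 7 statements merged into one kernel-verified Lean document; each statement's English description precedes it below -/
import Mathlib

section
/- For 0 < q ≤ 1 and integers r > 1, s ≥ 0, t ≥ 0, the quantity A_q^k(r,s,t) satisfies the recurrence A_q^k(r,s,t) = Σ_{j=0}^{k-1} q^{(r-1)j} A_q^k(r-1, s-j, t) + Σ_{j=k}^{s} q^{(r-1)j} A_q^k(r-1, s-j, t - ⌊j/k⌋). -/
open Finset

/-- `A_q^k(r,s,t) = Σ q^(y₂+2y₃+⋯+(r-1)yᵣ)` over nonnegative tuples with
`Σ yᵢ = s` and `Σ ⌊yᵢ/k⌋ = t`. -/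
def Aqsum (q : ℝ) (k r s t : ℕ) : ℝ :=
  ∑ y ∈ (Fintype.piFinset fun _ : Fin r => Finset.range (s + 1)).filter
      (fun y => (∑ i, y i) = s ∧ (∑ i, y i / k) = t),
    q ^ (∑ i : Fin r, (i : ℕ) * y i)

/-- `A_q^k` with integer arguments, vanishing in degenerate (negative) cases. -/
def AqZ (q : ℝ) (k r : ℕ) (s t : ℤ) : ℝ :=
  if 0 ≤ s ∧ 0 ≤ t then Aqsum q k r s.toNat t.toNat else 0

lemma Aqsum_succ (q : ℝ) (k r s t : ℕ) :
    Aqsum q k (r+1) s t =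
      ∑ j ∈ Finset.range (s+1), q ^ (r * j) *
        (if j / k ≤ t then Aqsum q k r (s - j) (t - j / k) else 0) := by
  have hinner : ∀ j ∈ Finset.range (s+1),
      q ^ (r * j) * (if j / k ≤ t then Aqsum q k r (s - j) (t - j / k) else 0) =
      ∑ z ∈ (Fintype.piFinset fun _ : Fin r => Finset.range (s - j + 1)).filter
          (fun z => (∑ i, z i) = s - j ∧ (∑ i, z i / k) + j / k = t),
        q ^ (r * j + ∑ i : Fin r, (i : ℕ) * z i) := by
    intro j _
    by_cases h : j / k ≤ t
    · have hset : ((Fintype.piFinset fun _ : Fin r => Finset.range (s - j + 1)).filter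
          (fun z => (∑ i, z i) = s - j ∧ (∑ i, z i / k) = t - j / k)) =
          ((Fintype.piFinset fun _ : Fin r => Finset.range (s - j + 1)).filter
          (fun z => (∑ i, z i) = s - j ∧ (∑ i, z i / k) + j / k = t)) := by
        ext z
        simp only [Finset.mem_filter]
        constructor <;> rintro ⟨h1, h2, h3⟩ <;> exact ⟨h1, h2, by omega⟩
      rw [if_pos h, Aqsum, hset, Finset.mul_sum]
      exact Finset.sum_congr rfl fun z _ => (pow_add q _ _).symm
    · have hempty : ((Fintype.piFinset fun _ : Fin r => Finset.range (s - j + 1)).filter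
          (fun z => (∑ i, z i) = s - j ∧ (∑ i, z i / k) + j / k = t)) = ∅ := by
        ext z
        simp only [Finset.mem_filter, Finset.notMem_empty, iff_false, not_and]
        rintro _ _ h3
        omega
      rw [if_neg h, mul_zero, hempty, Finset.sum_empty]
  rw [Finset.sum_congr rfl hinner, Finset.sum_sigma']
  rw [Aqsum]
  refine Finset.sum_nbij' (fun y => ⟨y (Fin.last r), Fin.init y⟩)
    (fun p => Fin.snoc p.2 p.1) ?_ ?_ ?_ ?_ ?_
  · intro y hy
    simp only [Finset.mem_filter, Fintype.mem_piFinset, Finset.mem_range] at hy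
    obtain ⟨hy1, hy2, hy3⟩ := hy
    rw [Fin.sum_univ_castSucc] at hy2 hy3
    simp only [Finset.mem_sigma, Finset.mem_filter, Fintype.mem_piFinset, Finset.mem_range,
      Fin.init]
    refine ⟨by omega, fun i => ?_, by omega, by omega⟩
    have hsl := Finset.single_le_sum (f := fun i : Fin r => y i.castSucc)
      (fun i _ => Nat.zero_le _) (Finset.mem_univ i)
    omega
  · rintro ⟨j, z⟩ hp
    simp only [Finset.mem_sigma, Finset.mem_filter, Fintype.mem_piFinset, Finset.mem_range] at hp
    obtain ⟨hj, hz, hz2, hz3⟩ := hp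
    simp only [Finset.mem_filter, Fintype.mem_piFinset, Finset.mem_range]
    rw [Fin.sum_univ_castSucc, Fin.sum_univ_castSucc]
    simp only [Fin.snoc_castSucc, Fin.snoc_last]
    refine ⟨fun i => ?_, by omega, by omega⟩
    induction i using Fin.lastCases with
    | last => simp only [Fin.snoc_last]; omega
    | cast i => simp only [Fin.snoc_castSucc]; have := hz i; omega
  · intro y _; simp [Fin.snoc_init_self]
  · rintro ⟨j, z⟩ _; simp [Fin.init_snoc, Fin.snoc_last]
  · intro y _
    congr 1
    rw [Fin.sum_univ_castSucc]
    simp only [Fin.coe_castSucc, Fin.val_last, Fin.init]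
    ring

theorem Aq_recurrence (q : ℝ) (hq0 : 0 < q) (hq1 : q ≤ 1) (k r : ℕ) (hk : 0 < k)
    (hr : 1 < r) (s t : ℤ) (hs : 0 ≤ s) (ht : 0 ≤ t) :
    AqZ q k r s t =
      (∑ j ∈ Finset.range k, q ^ ((r - 1) * j) * AqZ q k (r - 1) (s - j) t) +
      ∑ j ∈ Finset.Icc (k : ℤ) s,
        q ^ ((((r : ℤ) - 1) * j).toNat) * AqZ q k (r - 1) (s - j) (t - j / k) := by
  obtain ⟨S, rfl⟩ := Int.eq_ofNat_of_zero_le hs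
  obtain ⟨T, rfl⟩ := Int.eq_ofNat_of_zero_le ht
  obtain ⟨r', rfl⟩ : ∃ r', r = r' + 1 := ⟨r - 1, by omega⟩
  have hrr : r' + 1 - 1 = r' := rfl
  have hL : AqZ q k (r'+1) (S:ℤ) (T:ℤ) = Aqsum q k (r'+1) S T := by
    simp [AqZ]
  rw [hL, Aqsum_succ, hrr]
  have step1 : ∑ j ∈ Finset.range (S+1), q ^ (r' * j) *
      (if j / k ≤ T then Aqsum q k r' (S - j) (T - j / k) else 0) =
      ∑ j ∈ Finset.range (max k (S+1)), q ^ (r' * j) *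
      (if j ≤ S ∧ j / k ≤ T then Aqsum q k r' (S - j) (T - j / k) else 0) := by
    rw [Finset.sum_congr rfl
      (g := fun j => q ^ (r' * j) *
        (if j ≤ S ∧ j / k ≤ T then Aqsum q k r' (S - j) (T - j / k) else 0))
      (fun j hj => by
        rw [Finset.mem_range] at hj
        have hjS : j ≤ S := by omega
        by_cases h : j / k ≤ T <;> simp [h, hjS])]
    refine Finset.sum_subset (by intro x hx; simp only [Finset.mem_range] at *; omega) ?_
    intro x _ hx
    rw [Finset.mem_range, Nat.lt_succ_iff, not_le] at hx
    rw [if_neg (by omega), mul_zero]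
  rw [step1, Finset.range_eq_Ico,
    ← Finset.sum_Ico_consecutive _ (Nat.zero_le k) (le_max_left k (S+1)),
    ← Finset.range_eq_Ico]
  congr 1
  · refine Finset.sum_congr rfl fun j hj => ?_
    rw [Finset.mem_range] at hj
    have hdiv : j / k = 0 := Nat.div_eq_of_lt hj
    rw [hdiv]
    simp only [AqZ]
    by_cases h : j ≤ S
    · rw [if_pos ⟨h, Nat.zero_le T⟩, if_pos ⟨by omega, Int.ofNat_nonneg T⟩]
      congr 2 <;> omega
    · rw [if_neg (by omega), if_neg (by omega)]
  · have hIco : Finset.Ico k (max k (S+1)) = Finset.Icc k S := by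
      ext x
      simp only [Finset.mem_Ico, Finset.mem_Icc]
      omega
    rw [hIco]
    refine Finset.sum_nbij' (fun j => (j : ℤ)) (fun j => j.toNat) ?_ ?_ ?_ ?_ ?_
    · intro j hj
      rw [Finset.mem_Icc] at hj
      show (j : ℤ) ∈ Finset.Icc (k : ℤ) (S : ℤ)
      rw [Finset.mem_Icc]
      omega
    · intro j hj
      rw [Finset.mem_Icc] at hj
      show j.toNat ∈ Finset.Icc k S
      rw [Finset.mem_Icc]
      omega
    · intro j _
      show ((j : ℤ)).toNat = j
      omega
    · intro j hj
      rw [Finset.mem_Icc] at hj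
      show ((j.toNat : ℤ)) = j
      omega
    · intro j hj
      rw [Finset.mem_Icc] at hj
      show q ^ (r' * j) * (if j ≤ S ∧ j / k ≤ T then Aqsum q k r' (S - j) (T - j / k) else 0)
        = q ^ (((((r'+1 : ℕ) : ℤ) - 1) * (j : ℤ)).toNat) *
          AqZ q k (r'+1-1) ((S : ℤ) - (j : ℤ)) ((T : ℤ) - (j : ℤ) / (k : ℤ))

      have hdiv : ((j : ℤ) / (k : ℤ)) = ((j / k : ℕ) : ℤ) := (Int.natCast_div j k).symm
      have hexp : (((((r'+1 : ℕ) : ℤ)) - 1) * (j : ℤ)).toNat = r' * j := by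
        rw [show (((r'+1 : ℕ) : ℤ)) - 1 = (r' : ℤ) by push_cast; ring,
          show (r' : ℤ) * (j : ℤ) = ((r' * j : ℕ) : ℤ) by push_cast; ring,
          Int.toNat_natCast]
      rw [hdiv, hexp, hrr]
      congr 1
      simp only [AqZ]
      by_cases h : j / k ≤ T
      · rw [if_pos ⟨hj.2, h⟩, if_pos ⟨by omega, by omega⟩]
        congr 1 <;> omega
      · rw [if_neg (by omega), if_neg (by omega)]
end

section
/- For 0 < q ≤ 1 and integers r > 1, s ≥ tk, t ≤ r, the quantity B_q^k(r,s,t) satisfies the recurrence B_q^k(r,s,t) = Σ_{j=0}^{s-(t-1)k} q^{(r-1)j} B_q^k(r-1, s-j, t - I(j-k)), where I(m) = 1 if m ≥ 0 and I(m) = 0 otherwise. -/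
open Finset

/-- `B_q^k(r,s,t) = Σ q^(y₂+2y₃+⋯+(r-1)yᵣ)` over nonnegative tuples with
`Σ yᵢ = s` and exactly `t` of the `yᵢ` satisfying `yᵢ ≥ k`. -/
def Bqsum (q : ℝ) (k r s t : ℕ) : ℝ :=
  ∑ y ∈ (Fintype.piFinset fun _ : Fin r => Finset.range (s + 1)).filter
      (fun y => (∑ i, y i) = s ∧ (∑ i, if k ≤ y i then 1 else 0) = t),
    q ^ (∑ i : Fin r, (i : ℕ) * y i)

/-- `B_q^k` with integer arguments, vanishing in degenerate (negative) cases. -/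
def BqZ (q : ℝ) (k r : ℕ) (s t : ℤ) : ℝ :=
  if 0 ≤ s ∧ 0 ≤ t then Bqsum q k r s.toNat t.toNat else 0

lemma Bqsum_eq_zero (q : ℝ) (k r s t : ℕ) (h : s < t * k) : Bqsum q k r s t = 0 := by
  unfold Bqsum
  apply Finset.sum_eq_zero
  intro y hy
  simp only [Finset.mem_filter] at hy
  obtain ⟨-, hsum, hcnt⟩ := hy
  exfalso
  have hle : t * k ≤ s := by
    calc t * k = (∑ i, if k ≤ y i then 1 else 0) * k := by rw [hcnt]
      _ = ∑ i, (if k ≤ y i then 1 else 0) * k := Finset.sum_mul _ _ _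
      _ ≤ ∑ i, y i := Finset.sum_le_sum fun i _ => by
            by_cases hki : k ≤ y i <;> simp [hki]
      _ = s := hsum
  omega

lemma BqZ_eq_zero (q : ℝ) (k r : ℕ) (s t : ℤ) (h : s < t * k) : BqZ q k r s t = 0 := by
  unfold BqZ
  split
  · next hc =>
    apply Bqsum_eq_zero
    have h1 : (s.toNat : ℤ) = s := Int.toNat_of_nonneg hc.1
    have h2 : (t.toNat : ℤ) = t := Int.toNat_of_nonneg hc.2
    have : (s.toNat : ℤ) < (t.toNat : ℤ) * (k : ℤ) := by rw [h1, h2]; exact h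
    exact_mod_cast this
  · rfl

lemma fiber_bij (q : ℝ) (k r s t' j : ℕ) (hj : j ≤ s) :
    ∑ y ∈ ((Fintype.piFinset fun _ : Fin (r + 1) => Finset.range (s + 1)).filter
        (fun y => (∑ i, y i) = s ∧
          (∑ i, if k ≤ y i then 1 else 0) = t' + (if k ≤ j then 1 else 0))).filter
        (fun y => y (Fin.last r) = j),
      q ^ (∑ i : Fin (r + 1), (i : ℕ) * y i) =
    q ^ (r * j) * Bqsum q k r (s - j) t' := by
  unfold Bqsum
  rw [Finset.mul_sum]
  apply Finset.sum_nbij' (i := fun y => fun i : Fin r => y i.castSucc)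
    (j := fun z => (Fin.snoc z j : Fin (r + 1) → ℕ))
  · intro y hy
    simp only [Finset.mem_filter, Fintype.mem_piFinset, Finset.mem_range] at hy ⊢
    obtain ⟨⟨hmem, hsum, hcnt⟩, hlast⟩ := hy
    rw [Fin.sum_univ_castSucc] at hsum hcnt
    rw [hlast] at hsum hcnt
    refine ⟨?_, ?_, ?_⟩
    · intro i
      have h1 : y i.castSucc ≤ ∑ i : Fin r, y i.castSucc :=
        Finset.single_le_sum (f := fun i : Fin r => y i.castSucc)
          (fun _ _ => Nat.zero_le _) (Finset.mem_univ i)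
      omega
    · omega
    · omega
  · intro z hz
    simp only [Finset.mem_filter, Fintype.mem_piFinset, Finset.mem_range] at hz ⊢
    obtain ⟨hmem, hsum, hcnt⟩ := hz
    have hs1 : (∑ i : Fin (r + 1), (Fin.snoc z j : Fin (r + 1) → ℕ) i)
        = (∑ i : Fin r, z i) + j := by
      rw [Fin.sum_univ_castSucc]
      simp
    have hs2 : (∑ i : Fin (r + 1), if k ≤ (Fin.snoc z j : Fin (r + 1) → ℕ) i then 1 else 0)
        = (∑ i : Fin r, if k ≤ z i then 1 else 0) + (if k ≤ j then 1 else 0) := by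
      rw [Fin.sum_univ_castSucc]
      simp
    refine ⟨⟨?_, ?_, ?_⟩, ?_⟩
    · intro i
      induction i using Fin.lastCases with
      | last => simp only [Fin.snoc_last]; omega
      | cast i => have := hmem i; simp only [Fin.snoc_castSucc]; omega
    · rw [hs1, hsum]; omega
    · rw [hs2, hcnt]
    · simp
  · intro y hy
    simp only [Finset.mem_filter] at hy
    rw [← hy.2]
    exact Fin.snoc_init_self y
  · intro z hz
    funext i
    simp
  · intro y hy
    simp only [Finset.mem_filter, Fintype.mem_piFinset, Finset.mem_range] at hy
    obtain ⟨⟨hmem, hsum, hcnt⟩, hlast⟩ := hy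
    have hw : (∑ i : Fin (r + 1), (i : ℕ) * y i) =
        (∑ i : Fin r, (i : ℕ) * y i.castSucc) + r * j := by
      rw [Fin.sum_univ_castSucc]
      simp [hlast]
    rw [hw, pow_add, mul_comm]

lemma fiber_eq (q : ℝ) (k r s t j : ℕ) (hj : j ≤ s) :
    ∑ y ∈ ((Fintype.piFinset fun _ : Fin (r + 1) => Finset.range (s + 1)).filter
        (fun y => (∑ i, y i) = s ∧ (∑ i, if k ≤ y i then 1 else 0) = t)).filter
        (fun y => y (Fin.last r) = j),
      q ^ (∑ i : Fin (r + 1), (i : ℕ) * y i) =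
    q ^ (r * j) *
      (if k ≤ j then (if t = 0 then 0 else Bqsum q k r (s - j) (t - 1))
       else Bqsum q k r (s - j) t) := by
  by_cases hkj : k ≤ j
  · by_cases ht : t = 0
    · rw [if_pos hkj, if_pos ht, mul_zero]
      apply Finset.sum_eq_zero
      intro y hy
      exfalso
      simp only [Finset.mem_filter, Fintype.mem_piFinset, Finset.mem_range] at hy
      obtain ⟨⟨hmem, hsum, hcnt⟩, hlast⟩ := hy
      have h1 : (if k ≤ y (Fin.last r) then 1 else 0) = 1 := by
        rw [hlast, if_pos hkj]
      have h2 : (if k ≤ y (Fin.last r) then 1 else 0) ≤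
          ∑ i, if k ≤ y i then 1 else 0 :=
        Finset.single_le_sum (f := fun i => if k ≤ y i then 1 else 0)
          (fun i _ => by positivity) (Finset.mem_univ _)
      omega
    · rw [if_pos hkj, if_neg ht]
      have h := fiber_bij q k r s (t - 1) j hj
      rw [if_pos hkj, show t - 1 + 1 = t from by omega] at h
      exact h
  · rw [if_neg hkj]
    have h := fiber_bij q k r s t j hj
    rw [if_neg hkj, add_zero] at h
    exact h

lemma Bqsum_succ (q : ℝ) (k r s t : ℕ) :
    Bqsum q k (r + 1) s t =
      ∑ j ∈ Finset.range (s + 1), q ^ (r * j) *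
        (if k ≤ j then (if t = 0 then 0 else Bqsum q k r (s - j) (t - 1))
         else Bqsum q k r (s - j) t) := by
  conv_lhs => unfold Bqsum
  rw [← Finset.sum_fiberwise_of_maps_to (t := Finset.range (s + 1))
      (g := fun y : Fin (r + 1) → ℕ => y (Fin.last r))
      (fun y hy => by
        simp only [Finset.mem_filter, Fintype.mem_piFinset, Finset.mem_range] at hy ⊢
        exact hy.1 _)]
  exact Finset.sum_congr rfl fun j hj =>
    fiber_eq q k r s t j (by simpa using Nat.lt_succ_iff.mp (Finset.mem_range.mp hj))

theorem Bq_recurrence (q : ℝ) (hq0 : 0 < q) (hq1 : q ≤ 1) (k r : ℕ) (hk : 0 < k)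
    (hr : 1 < r) (s t : ℤ) (hs : t * k ≤ s) (ht : t ≤ (r : ℤ)) :
    BqZ q k r s t =
      ∑ j ∈ Finset.Icc (0 : ℤ) (s - (t - 1) * k),
        q ^ ((((r : ℤ) - 1) * j).toNat) *
          BqZ q k (r - 1) (s - j) (t - if (k : ℤ) ≤ j then 1 else 0) := by
  by_cases h0 : 0 ≤ t
  · -- main case
    have hs0 : 0 ≤ s := le_trans (mul_nonneg h0 (by positivity)) hs
    lift s to ℕ using hs0 with S
    lift t to ℕ using h0 with T
    obtain ⟨R, rfl⟩ : ∃ R, r = R + 1 := ⟨r - 1, by omega⟩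
    -- LHS
    rw [show BqZ q k (R + 1) (S : ℤ) (T : ℤ) = Bqsum q k (R + 1) S T by
      rw [BqZ, if_pos ⟨by positivity, by positivity⟩, Int.toNat_natCast,
        Int.toNat_natCast]]
    rw [Bqsum_succ]
    simp only [Nat.add_sub_cancel, Nat.cast_add, Nat.cast_one]
    -- shrink/extend the integer sum to `Icc 0 S`
    have hvanish : ∀ j : ℤ, 0 ≤ j → ((S : ℤ) - ((T : ℤ) - 1) * k < j ∨ (S : ℤ) < j) →
        q ^ ((((R : ℤ) + 1 - 1) * j).toNat) *
          BqZ q k R ((S : ℤ) - j) ((T : ℤ) - if (k : ℤ) ≤ j then 1 else 0) = 0 := by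
      intro j hj0 hj
      rcases le_or_gt j (S : ℤ) with hjS | hjS
      · -- then S - ((T:ℤ)-1)*k < j
        have hjU : (S : ℤ) - ((T : ℤ) - 1) * k < j := by
          rcases hj with h | h
          · exact h
          · omega
        rw [BqZ_eq_zero, mul_zero]
        by_cases hkj : (k : ℤ) ≤ j
        · rw [if_pos hkj]; linarith
        · rw [if_neg hkj]
          have hTk : ((T : ℤ) - 1) * k ≤ (T : ℤ) * k :=
            mul_le_mul_of_nonneg_right (by linarith) (by positivity)
          linarith
      · rw [BqZ, if_neg, mul_zero]
        intro hc
        omega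
    have hsum_eq : ∑ j ∈ Finset.Icc (0 : ℤ) ((S : ℤ) - ((T : ℤ) - 1) * k),
          q ^ ((((R : ℤ) + 1 - 1) * j).toNat) *
            BqZ q k R ((S : ℤ) - j) ((T : ℤ) - if (k : ℤ) ≤ j then 1 else 0)
        = ∑ j ∈ Finset.Icc (0 : ℤ) (S : ℤ),
          q ^ ((((R : ℤ) + 1 - 1) * j).toNat) *
            BqZ q k R ((S : ℤ) - j) ((T : ℤ) - if (k : ℤ) ≤ j then 1 else 0) := by
      set U : ℤ := (S : ℤ) - ((T : ℤ) - 1) * k with hU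
      set M : ℤ := max U (S : ℤ) with hM
      rw [show ∑ j ∈ Finset.Icc (0 : ℤ) U, q ^ ((((R : ℤ) + 1 - 1) * j).toNat) *
            BqZ q k R ((S : ℤ) - j) ((T : ℤ) - if (k : ℤ) ≤ j then 1 else 0)
          = ∑ j ∈ Finset.Icc (0 : ℤ) M, q ^ ((((R : ℤ) + 1 - 1) * j).toNat) *
            BqZ q k R ((S : ℤ) - j) ((T : ℤ) - if (k : ℤ) ≤ j then 1 else 0) from
        Finset.sum_subset (Finset.Icc_subset_Icc le_rfl (le_max_left _ _))
          (fun j hjM hjU => by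
            simp only [Finset.mem_Icc] at hjM hjU
            exact hvanish j hjM.1 (Or.inl (by omega)))]
      exact (Finset.sum_subset (Finset.Icc_subset_Icc le_rfl (le_max_right _ _))
        (fun j hjM hjS => by
          simp only [Finset.mem_Icc] at hjM hjS
          exact hvanish j hjM.1 (Or.inr (by omega)))).symm
    rw [hsum_eq]
    -- reindex `Icc 0 S` by `range (S + 1)`
    apply Finset.sum_nbij' (i := fun n : ℕ => (n : ℤ)) (j := fun j : ℤ => j.toNat)
    · intro n hn
      simp only [Finset.mem_range] at hn
      simp only [Finset.mem_Icc]
      omega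
    · intro j hj
      simp only [Finset.mem_Icc] at hj
      simp only [Finset.mem_range]
      omega
    · intro n _; exact Int.toNat_natCast n
    · intro j hj
      simp only [Finset.mem_Icc] at hj
      omega
    · intro n hn
      simp only [Finset.mem_range] at hn
      have hnS : n ≤ S := by omega
      have hexp : ((((R : ℤ) + 1 - 1) * (n : ℤ)).toNat) = R * n := by
        rw [show ((R : ℤ) + 1 - 1) * (n : ℤ) = ((R * n : ℕ) : ℤ) by push_cast; ring,
          Int.toNat_natCast]
      rw [hexp]
      congr 1
      by_cases hkn : k ≤ n
      · rw [if_pos hkn, if_pos (show (k : ℤ) ≤ (n : ℤ) by exact_mod_cast hkn)]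
        by_cases hT : T = 0
        · rw [if_pos hT, BqZ, if_neg (by omega)]
        · rw [if_neg hT, BqZ, if_pos ⟨by omega, by omega⟩]
          congr 1 <;> omega
      · rw [if_neg hkn, if_neg (show ¬ (k : ℤ) ≤ (n : ℤ) by exact_mod_cast hkn), BqZ,
          if_pos ⟨by omega, by omega⟩]
        congr 1 <;> omega
  · -- degenerate case: t < 0
    rw [BqZ, if_neg (fun hc => h0 hc.2)]
    symm
    apply Finset.sum_eq_zero
    intro j hj
    rw [BqZ, if_neg, mul_zero]
    intro hc
    have : (if (k : ℤ) ≤ j then (1 : ℤ) else 0) = 1 ∨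
        (if (k : ℤ) ≤ j then (1 : ℤ) else 0) = 0 := by
      split <;> simp
    omega
end

section
/- The number of nonnegative integer solutions (y_1,...,y_r) of y_1 + ... + y_r = s for which exactly t of the y_i satisfy y_i ≥ k equals C(r,t) · H_{r-t}(s - tk, r, k-1), where H_m(α, r, k) = Σ_{j=0}^{⌊α/(k+1)⌋} (-1)^j C(m, j) C(α - (k+1)j + r - 1, α - (k+1)j). -/
open Finset

/-- `H_m(α,r,k)`: number of allocations of `α` balls into `r` cells in which each of `m`
specified cells receives at most `k` balls. -/
def Hfun (m a r k : ℕ) : ℤ :=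
  ∑ j ∈ Finset.range (a / (k + 1) + 1),
    (-1) ^ j * (m.choose j : ℤ) * ((a - (k + 1) * j + r - 1).choose (a - (k + 1) * j) : ℤ)


lemma stars_and_bars {ι : Type*} [DecidableEq ι] (s : Finset ι) (a : ℕ) :
    (Finset.piAntidiag s a).card = (a + s.card - 1).choose a := by
  induction s using Finset.cons_induction generalizing a with
  | empty =>
    rw [Finset.piAntidiag_empty]
    rcases Nat.eq_zero_or_pos a with rfl | ha
    · simp
    · rw [if_neg (by omega)]
      refine (Nat.choose_eq_zero_of_lt ?_).symm; simp; omega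
  | cons i s hi ih =>
    rw [Finset.piAntidiag_cons hi, Finset.card_disjiUnion]
    simp only [Finset.card_map, ih]
    rw [Nat.sum_antidiagonal_eq_sum_range_succ_mk]
    rw [Finset.card_cons]
    rcases Nat.eq_zero_or_pos s.card with hc | hc
    · rw [hc]
      have h0 : ∀ x ∈ Finset.range (a+1), (a - x + 0 - 1).choose (a - x) = if x = a then 1 else 0 := by
        intro x hx
        simp only [Finset.mem_range] at hx
        rcases eq_or_ne x a with rfl | hxa
        · simp
        · rw [if_neg hxa, Nat.choose_eq_zero_of_lt]; omega
      rw [show Nat.succ a = a + 1 from rfl, Finset.sum_congr rfl h0,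
        Finset.sum_ite_eq' (Finset.range (a+1)) a (fun _ => 1), if_pos (by simp)]
      simp
    · obtain ⟨c, hcc⟩ : ∃ c, s.card = c + 1 := ⟨s.card - 1, by omega⟩
      have h1 : ∀ x ∈ Finset.range (a+1), (a - x + s.card - 1).choose (a - x)
          = ((a - x) + c).choose c := by
        intro x hx
        rw [hcc, show a - x + (c+1) - 1 = (a-x) + c by omega]
        rw [← Nat.choose_symm (show c ≤ a - x + c by omega), Nat.add_sub_cancel]
      rw [show Nat.succ a = a + 1 from rfl, Finset.sum_congr rfl h1]
      have h2 := Finset.sum_range_reflect (fun x => (x + c).choose c) (a+1)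
      simp only [Nat.add_sub_cancel] at h2
      rw [h2, Nat.sum_range_add_choose a c, hcc]
      rw [show a + (c + 1 + 1) - 1 = a + c + 1 by omega,
        ← Nat.choose_symm (show a ≤ a + c + 1 by omega)]
      congr 1
      omega


lemma sum_indicator_const {r k : ℕ} (T : Finset (Fin r)) :
    (∑ i, if i ∈ T then k else 0) = k * T.card := by
  rw [Finset.sum_ite_mem, Finset.univ_inter, Finset.sum_const, smul_eq_mul, mul_comm]

lemma shift_card {r a k : ℕ} (T : Finset (Fin r)) (h : k * T.card ≤ a)
    (p : (Fin r → ℕ) → Prop) [DecidablePred p] :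
    ((Finset.piAntidiag (Finset.univ : Finset (Fin r)) a).filter
        (fun y => (∀ i ∈ T, k ≤ y i) ∧ p (fun i => y i - if i ∈ T then k else 0))).card =
      ((Finset.piAntidiag (Finset.univ : Finset (Fin r)) (a - k * T.card)).filter p).card := by
  apply Finset.card_bij' (fun y _ => fun i => y i - if i ∈ T then k else 0)
    (fun z _ => fun i => z i + if i ∈ T then k else 0)
  · intro y hy
    simp only [Finset.mem_filter, Finset.mem_piAntidiag] at hy ⊢
    obtain ⟨⟨hsum, -⟩, hT, hp⟩ := hy
    refine ⟨⟨?_, fun i _ => Finset.mem_univ i⟩, hp⟩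
    have : ∀ i, y i = (y i - if i ∈ T then k else 0) + (if i ∈ T then k else 0) := by
      intro i
      by_cases hi : i ∈ T
      · have := hT i hi; simp [hi]; omega
      · simp [hi]
    rw [Finset.sum_congr rfl (fun i _ => this i), Finset.sum_add_distrib,
      sum_indicator_const] at hsum
    omega
  · intro z hz
    simp only [Finset.mem_filter, Finset.mem_piAntidiag] at hz ⊢
    obtain ⟨⟨hsum, -⟩, hp⟩ := hz
    refine ⟨⟨?_, fun i hi => Finset.mem_univ i⟩, fun i hi => by simp [hi], ?_⟩
    · rw [Finset.sum_add_distrib, sum_indicator_const, hsum]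
      omega
    · convert hp using 2 with i
      rcases Finset.decidableMem i T with hi | hi <;> simp [hi]
  · intro y hy
    simp only [Finset.mem_filter, Finset.mem_piAntidiag] at hy
    funext i
    rcases Finset.decidableMem i T with hi | hi <;> simp [hi]
    exact Nat.sub_add_cancel (hy.2.1 i hi)
  · intro z hz
    funext i
    rcases Finset.decidableMem i T with hi | hi <;> simp [hi]

lemma shift_card_zero {r a k : ℕ} (T : Finset (Fin r)) (h : a < k * T.card) :
    ((Finset.piAntidiag (Finset.univ : Finset (Fin r)) a).filter
        (fun y => ∀ i ∈ T, k ≤ y i)).card = 0 := by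
  rw [Finset.card_eq_zero, Finset.filter_eq_empty_iff]
  intro y hy hT
  simp only [Finset.mem_piAntidiag] at hy
  have h1 : k * T.card = ∑ i ∈ T, k := by rw [Finset.sum_const, smul_eq_mul, mul_comm]
  have h2 : (∑ i ∈ T, k) ≤ ∑ i ∈ T, y i := Finset.sum_le_sum hT
  have h3 : (∑ i ∈ T, y i) ≤ ∑ i, y i := Finset.sum_le_sum_of_subset (Finset.subset_univ T)
  have h4 : k * T.card ≤ a := by rw [h1]; exact le_trans h2 (le_trans h3 (le_of_eq hy.1))
  omega

lemma card_big_coords {r a k : ℕ} (T : Finset (Fin r)) :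
    (((Finset.piAntidiag (Finset.univ : Finset (Fin r)) a).filter
        (fun y => ∀ i ∈ T, k ≤ y i)).card : ℤ) =
      if k * T.card ≤ a then ((a - k * T.card + r - 1).choose (a - k * T.card) : ℤ) else 0 := by
  rcases le_or_gt (k * T.card) a with h | h
  · rw [if_pos h]
    have h1 := shift_card (a := a) T h (fun _ => True)
    simp only [and_true, Finset.filter_true] at h1
    rw [h1, stars_and_bars, Finset.card_univ, Fintype.card_fin]
  · rw [if_neg (not_le.mpr h), shift_card_zero T h, Nat.cast_zero]

lemma count_restricted {r a k : ℕ} (hk : 0 < k) (S : Finset (Fin r)) :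
    ((((Finset.piAntidiag (Finset.univ : Finset (Fin r)) a).filter
        (fun y => ∀ i ∈ S, y i ≤ k - 1)).card : ℤ)) = Hfun S.card a r (k - 1) := by
  classical
  set P := Finset.piAntidiag (Finset.univ : Finset (Fin r)) a with hP
  -- subtype cards
  have hsub : ∀ (q : (Fin r → ℕ) → Prop) [DecidablePred q],
      #(Finset.univ.filter (fun y : {y // y ∈ P} => q y.1)) = #(P.filter q) := by
    intro q _
    rw [Finset.univ_eq_attach, Finset.filter_attach, Finset.card_map, Finset.card_attach]
  set Sbad : Fin r → Finset {y // y ∈ P} := fun i => Finset.univ.filter (fun y => k ≤ y.1 i)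
    with hSbad
  have hIE := Finset.inclusion_exclusion_card_inf_compl S Sbad
  have hinf : ∀ T : Finset (Fin r),
      T.inf Sbad = Finset.univ.filter (fun y : {y // y ∈ P} => ∀ i ∈ T, k ≤ y.1 i) := by
    intro T; ext y; simp [Finset.mem_inf, hSbad]
  have hinfc : S.inf (fun i => (Sbad i)ᶜ)
      = Finset.univ.filter (fun y : {y // y ∈ P} => ∀ i ∈ S, y.1 i ≤ k - 1) := by
    ext y
    simp only [Finset.mem_inf, Finset.mem_compl, hSbad, Finset.mem_filter, Finset.mem_univ,
      true_and, not_le]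
    exact forall₂_congr (fun i _ => by omega)
  rw [hinfc] at hIE
  rw [← hsub]
  rw [hIE]
  have hterm : ∀ T ∈ S.powerset, (-1 : ℤ) ^ #T * #(T.inf Sbad)
      = (-1) ^ #T * (if k * #T ≤ a then ((a - k * #T + r - 1).choose (a - k * #T) : ℤ) else 0) := by
    intro T _
    have hs := hsub (fun y => ∀ i ∈ T, k ≤ y i)
    rw [hinf T, hs, card_big_coords]
  rw [Finset.sum_congr rfl hterm, Finset.sum_powerset]
  have hinner : ∀ j ∈ Finset.range (#S + 1),
      (∑ T ∈ Finset.powersetCard j S, (-1 : ℤ) ^ #T *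
        (if k * #T ≤ a then ((a - k * #T + r - 1).choose (a - k * #T) : ℤ) else 0))
      = (#S).choose j * ((-1 : ℤ) ^ j *
        (if k * j ≤ a then ((a - k * j + r - 1).choose (a - k * j) : ℤ) else 0)) := by
    intro j _
    rw [Finset.sum_congr rfl (fun T hT => by
      rw [(Finset.mem_powersetCard.mp hT).2]), Finset.sum_const, Finset.card_powersetCard,
      nsmul_eq_mul]
  rw [Finset.sum_congr rfl hinner]
  -- now compare with Hfun
  have hk1 : k - 1 + 1 = k := by omega
  rw [Hfun, hk1]
  set N := max (#S) (a / k) + 1 with hN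
  set h : ℕ → ℤ := fun j => ((#S).choose j : ℤ) * ((-1) ^ j *
    (if k * j ≤ a then ((a - k * j + r - 1).choose (a - k * j) : ℤ) else 0)) with hh
  have e1 : ∑ j ∈ Finset.range (#S + 1), h j = ∑ j ∈ Finset.range N, h j := by
    apply Finset.sum_subset (Finset.range_subset_range.mpr (by omega))
    intro j _ hj
    simp only [Finset.mem_range, not_lt] at hj
    simp [hh, Nat.choose_eq_zero_of_lt (show #S < j by omega)]
  have e2 : ∑ j ∈ Finset.range (a / k + 1),
      (-1 : ℤ) ^ j * ((#S).choose j : ℤ) * ((a - k * j + r - 1).choose (a - k * j) : ℤ)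
      = ∑ j ∈ Finset.range N, h j := by
    apply Finset.sum_subset_zero_on_sdiff (Finset.range_subset_range.mpr (by omega))
    · intro j hj
      simp only [Finset.mem_sdiff, Finset.mem_range, not_lt] at hj
      have h2 : a < j * k := (Nat.div_lt_iff_lt_mul hk).mp (by omega)
      have : ¬ (k * j ≤ a) := by rw [mul_comm]; omega
      simp [hh, this]
    · intro j hj
      simp only [Finset.mem_range] at hj
      have : k * j ≤ a := by
        rw [mul_comm]; exact (Nat.le_div_iff_mul_le hk).mp (by omega)
      simp only [hh, if_pos this]
      ring
  rw [e1, ← e2]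

theorem B1_count_eq (k r s t : ℕ) (hk : 0 < k) (hts : t * k ≤ s) :
    ((((Fintype.piFinset fun _ : Fin r => Finset.range (s + 1)).filter
        (fun y => (∑ i, y i) = s ∧ (∑ i, if k ≤ y i then 1 else 0) = t)).card : ℤ)) =
      (r.choose t : ℤ) * Hfun (r - t) (s - t * k) r (k - 1) := by
  classical
  have hcard : ∀ y : Fin r → ℕ,
      (∑ i, if k ≤ y i then 1 else 0) = #(Finset.univ.filter fun i => k ≤ y i) :=
    fun y => (Finset.card_filter _ _).symm
  set D := Fintype.piFinset fun _ : Fin r => Finset.range (s + 1) with hD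
  -- Step A : partition according to the set of large coordinates
  have hpart : D.filter (fun y => (∑ i, y i) = s ∧ (∑ i, if k ≤ y i then 1 else 0) = t)
      = (Finset.powersetCard t (Finset.univ : Finset (Fin r))).biUnion
          (fun T => D.filter
            (fun y => (∑ i, y i) = s ∧ Finset.univ.filter (fun i => k ≤ y i) = T)) := by
    ext y
    simp only [Finset.mem_filter, Finset.mem_biUnion, Finset.mem_powersetCard_univ]
    constructor
    · rintro ⟨hyD, hsum, hind⟩
      exact ⟨Finset.univ.filter (fun i => k ≤ y i), by rw [← hcard y, hind], hyD, hsum, rfl⟩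
    · rintro ⟨T, hT, hyD, hsum, hfil⟩
      exact ⟨hyD, hsum, by rw [hcard y, hfil, hT]⟩
  have hdisj : ∀ T₁ ∈ Finset.powersetCard t (Finset.univ : Finset (Fin r)),
      ∀ T₂ ∈ Finset.powersetCard t (Finset.univ : Finset (Fin r)), T₁ ≠ T₂ →
      Disjoint (D.filter (fun y => (∑ i, y i) = s ∧ Finset.univ.filter (fun i => k ≤ y i) = T₁))
        (D.filter (fun y => (∑ i, y i) = s ∧ Finset.univ.filter (fun i => k ≤ y i) = T₂)) := by
    intro T₁ _ T₂ _ hne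
    rw [Finset.disjoint_left]
    intro y hy₁ hy₂
    simp only [Finset.mem_filter] at hy₁ hy₂
    exact hne (hy₁.2.2 ▸ hy₂.2.2 ▸ rfl)
  rw [hpart, Finset.card_biUnion hdisj, Nat.cast_sum]
  -- Step B : compute the cardinality for a fixed T
  have hstep : ∀ T ∈ Finset.powersetCard t (Finset.univ : Finset (Fin r)),
      ((D.filter (fun y => (∑ i, y i) = s ∧
          Finset.univ.filter (fun i => k ≤ y i) = T)).card : ℤ)
        = Hfun (r - t) (s - t * k) r (k - 1) := by
    intro T hT
    rw [Finset.mem_powersetCard_univ] at hT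
    have hset : D.filter (fun y => (∑ i, y i) = s ∧
          Finset.univ.filter (fun i => k ≤ y i) = T)
        = (Finset.piAntidiag (Finset.univ : Finset (Fin r)) s).filter
            (fun y => (∀ i ∈ T, k ≤ y i) ∧
              (fun z => ∀ i ∈ Tᶜ, z i ≤ k - 1) (fun i => y i - if i ∈ T then k else 0)) := by
      ext y
      simp only [Finset.mem_filter, Finset.mem_piAntidiag, hD, Fintype.mem_piFinset,
        Finset.mem_range, Finset.mem_compl]
      constructor
      · rintro ⟨hyD, hsum, hfil⟩
        have hiff : ∀ i, k ≤ y i ↔ i ∈ T := fun i => by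
          rw [← hfil]; simp
        refine ⟨⟨hsum, fun i _ => Finset.mem_univ i⟩, fun i hi => (hiff i).mpr hi, ?_⟩
        intro i hi
        have h1 : ¬ k ≤ y i := fun h => hi ((hiff i).mp h)
        rw [if_neg hi]
        omega
      · rintro ⟨⟨hsum, -⟩, hTge, hcle⟩
        refine ⟨?_, hsum, ?_⟩
        · intro i
          have h2 : y i ≤ s :=
            le_trans (Finset.single_le_sum (fun j _ => Nat.zero_le (y j)) (Finset.mem_univ i))
              (le_of_eq hsum)
          omega
        · ext i
          simp only [Finset.mem_filter, Finset.mem_univ, true_and]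
          constructor
          · intro hki
            by_contra hi
            have := hcle i hi
            rw [if_neg hi] at this
            omega
          · exact hTge i
    rw [hset, shift_card T (by rw [hT, mul_comm k t]; exact hts)
      (fun z => ∀ i ∈ Tᶜ, z i ≤ k - 1), count_restricted hk Tᶜ]
    rw [Finset.card_compl, Fintype.card_fin, hT, mul_comm k t]
  rw [Finset.sum_congr rfl hstep, Finset.sum_const, Finset.card_powersetCard,
    Finset.card_univ, Fintype.card_fin, nsmul_eq_mul]
end

section
/- For 0 < q ≤ 1 and integers r > 1, s ≥ 0, t ≥ 0, the quantity C_q^k(r,s,t) satisfies C_q^k(r,s,t) = Σ_{j=0}^{k-1} q^{(r-1)j} C_q^k(r-1, s-j, t) + Σ_{j=k}^{s} q^{(r-1)j} C_q^k(r-1, s-j, t-j+k-1). -/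
open Finset

/-- `C_q^k(r,s,t) = Σ q^(y₂+2y₃+⋯+(r-1)yᵣ)` over nonnegative tuples with
`Σ yᵢ = s` and `Σ C(yᵢ) = t`, where `C(j) = j - k + 1` if `j ≥ k` and `0` otherwise
(here `j - (k-1)` in truncated ℕ-subtraction). -/
def Cqsum (q : ℝ) (k r s t : ℕ) : ℝ :=
  ∑ y ∈ (Fintype.piFinset fun _ : Fin r => Finset.range (s + 1)).filter
      (fun y => (∑ i, y i) = s ∧ (∑ i, (y i - (k - 1))) = t),
    q ^ (∑ i : Fin r, (i : ℕ) * y i)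

/-- `C_q^k` with integer arguments, vanishing in degenerate (negative) cases. -/
def CqZ (q : ℝ) (k r : ℕ) (s t : ℤ) : ℝ :=
  if 0 ≤ s ∧ 0 ≤ t then Cqsum q k r s.toNat t.toNat else 0

lemma Cqsum_cap (q : ℝ) (k r N s t : ℕ) (h : s ≤ N) :
    ∑ y ∈ (Fintype.piFinset fun _ : Fin r => Finset.range (N + 1)).filter
        (fun y => (∑ i, y i) = s ∧ (∑ i, (y i - (k - 1))) = t),
      q ^ (∑ i : Fin r, (i : ℕ) * y i) = Cqsum q k r s t := by
  unfold Cqsum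
  apply Finset.sum_congr _ (fun _ _ => rfl)
  ext y
  simp only [mem_filter, Fintype.mem_piFinset, mem_range]
  constructor
  · rintro ⟨hy, hs, ht⟩
    refine ⟨fun i => ?_, hs, ht⟩
    have h1 : y i ≤ s := hs ▸ Finset.single_le_sum (fun i _ => Nat.zero_le (y i)) (mem_univ i)
    omega
  · rintro ⟨hy, hs, ht⟩
    exact ⟨fun i => lt_of_lt_of_le (hy i) (by omega), hs, ht⟩

lemma Cqsum_master (q : ℝ) (k m : ℕ) (hk : 0 < k) (s t : ℕ) :
    Cqsum q k (m+1) s t =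
      ∑ j ∈ range (s+1), q ^ (m*j) * CqZ q k m ((s:ℤ) - j) ((t:ℤ) - (j - (k-1) : ℕ)) := by
  have hterm : ∀ j ∈ range (s+1),
      q ^ (m*j) * CqZ q k m ((s:ℤ) - j) ((t:ℤ) - (j - (k-1) : ℕ)) =
      ∑ z ∈ (Fintype.piFinset fun _ : Fin m => Finset.range (s + 1)).filter
          (fun z => (∑ i, z i) + j = s ∧ (∑ i, (z i - (k - 1))) + (j - (k-1)) = t),
        q ^ ((∑ i : Fin m, (i : ℕ) * z i) + m * j) := by
    intro j hj
    rw [mem_range] at hj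
    by_cases hc : j - (k-1) ≤ t
    · have h1 : CqZ q k m ((s:ℤ) - j) ((t:ℤ) - (j - (k-1) : ℕ)) =
          Cqsum q k m (s - j) (t - (j - (k-1))) := by
        unfold CqZ
        rw [if_pos (by constructor <;> omega)]
        congr 1 <;> omega
      rw [h1, ← Cqsum_cap q k m s (s - j) (t - (j - (k-1))) (by omega), Finset.mul_sum]
      apply Finset.sum_congr
      · apply Finset.filter_congr
        intro z _
        constructor <;> rintro ⟨h3, h4⟩ <;> exact ⟨by omega, by omega⟩
      · intro z _
        rw [pow_add, mul_comm]
    · have h1 : CqZ q k m ((s:ℤ) - j) ((t:ℤ) - (j - (k-1) : ℕ)) = 0 := by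
        unfold CqZ
        rw [if_neg]
        rintro ⟨-, h2⟩
        omega
      rw [h1, mul_zero, Finset.filter_false_of_mem, Finset.sum_empty]
      rintro z - ⟨-, h4⟩
      omega
  rw [Finset.sum_congr rfl hterm]
  rw [Finset.sum_sigma']
  apply Finset.sum_nbij' (i := fun y => (⟨y (Fin.last m), fun i => y (Fin.castSucc i)⟩ :
      (j : ℕ) × (Fin m → ℕ))) (j := fun p => Fin.snoc p.2 p.1)
  · intro y hy
    simp only [mem_filter, Fintype.mem_piFinset, mem_range] at hy
    obtain ⟨hy1, hy2, hy3⟩ := hy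
    rw [Fin.sum_univ_castSucc] at hy2 hy3
    simp only [Finset.mem_sigma, mem_filter, Fintype.mem_piFinset, mem_range]
    exact ⟨by have := hy1 (Fin.last m); omega, fun i => hy1 _, hy2, hy3⟩
  · intro p hp
    simp only [Finset.mem_sigma, mem_filter, Fintype.mem_piFinset, mem_range] at hp
    obtain ⟨hp1, hp2, hp3, hp4⟩ := hp
    simp only [mem_filter, Fintype.mem_piFinset, mem_range]
    refine ⟨fun i => ?_, ?_, ?_⟩
    · induction i using Fin.lastCases with
      | last => simpa using hp1
      | cast i => simpa using hp2 i
    · rw [Fin.sum_univ_castSucc]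
      simpa using hp3
    · rw [Fin.sum_univ_castSucc]
      simpa using hp4
  · intro y _
    exact Fin.snoc_init_self y
  · intro p _
    simp [Fin.snoc_last, Fin.snoc_castSucc]
  · intro y _
    rw [Fin.sum_univ_castSucc]
    simp

theorem Cq_recurrence (q : ℝ) (hq0 : 0 < q) (hq1 : q ≤ 1) (k r : ℕ) (hk : 0 < k)
    (hr : 1 < r) (s t : ℤ) (hs : 0 ≤ s) (ht : 0 ≤ t) :
    CqZ q k r s t =
      (∑ j ∈ Finset.range k, q ^ ((r - 1) * j) * CqZ q k (r - 1) (s - j) t) +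
      ∑ j ∈ Finset.Icc (k : ℤ) s,
        q ^ ((((r : ℤ) - 1) * j).toNat) * CqZ q k (r - 1) (s - j) (t - j + k - 1) := by
  obtain ⟨m, rfl⟩ : ∃ m, r = m + 1 := ⟨r - 1, by omega⟩
  obtain ⟨S, rfl⟩ : ∃ S : ℕ, s = (S : ℤ) := ⟨s.toNat, by omega⟩
  obtain ⟨T, rfl⟩ : ∃ T : ℕ, t = (T : ℤ) := ⟨t.toNat, by omega⟩
  have hL : CqZ q k (m+1) (S : ℤ) (T : ℤ) = Cqsum q k (m+1) S T := by
    unfold CqZ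
    rw [if_pos ⟨Int.natCast_nonneg S, Int.natCast_nonneg T⟩]
    simp
  rw [hL, Cqsum_master q k m hk S T]
  have hmr : m + 1 - 1 = m := rfl
  rw [hmr]
  -- second sum over ℤ-Icc equals ℕ-Ico sum
  have hIcc : ∑ j ∈ Finset.Icc (k : ℤ) (S : ℤ),
        q ^ (((((m+1 : ℕ) : ℤ) - 1) * j).toNat) * CqZ q k m ((S:ℤ) - j) ((T:ℤ) - j + k - 1) =
      ∑ j ∈ Finset.Ico k (S+1),
        q ^ (((((m+1 : ℕ) : ℤ) - 1) * (j:ℤ)).toNat) * CqZ q k m ((S:ℤ) - j) ((T:ℤ) - j + k - 1) := by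
    apply Finset.sum_nbij' (i := Int.toNat) (j := fun n => (n : ℤ))
    · intro a ha
      simp only [Finset.mem_Icc] at ha
      simp only [Finset.mem_Ico]
      omega
    · intro a ha
      simp only [Finset.mem_Ico] at ha
      simp only [Finset.mem_Icc]
      omega
    · intro a ha
      simp only [Finset.mem_Icc] at ha
      omega
    · intro a _
      simp
    · intro a ha
      simp only [Finset.mem_Icc] at ha
      have : ((a.toNat : ℤ)) = a := by omega
      rw [this]
  rw [hIcc]
  by_cases hkS : k ≤ S
  · rw [Finset.range_eq_Ico, ← Finset.sum_Ico_consecutive _ (Nat.zero_le k) (by omega : k ≤ S + 1)]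
    congr 1
    · rw [← Finset.range_eq_Ico]
      apply Finset.sum_congr rfl
      intro j hj
      rw [Finset.mem_range] at hj
      have h0 : j - (k - 1) = 0 := by omega
      rw [h0]
      norm_num
    · apply Finset.sum_congr rfl
      intro j hj
      rw [Finset.mem_Ico] at hj
      congr 1
      · congr 1
        have : (((m+1 : ℕ) : ℤ) - 1) * (j:ℤ) = ((m * j : ℕ) : ℤ) := by push_cast; ring
        rw [this, Int.toNat_natCast]
      · congr 1
        have : ((j - (k-1) : ℕ) : ℤ) = (j : ℤ) - k + 1 := by omega
        rw [this]
        ring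
  · rw [Finset.Ico_eq_empty (by omega), Finset.sum_empty, add_zero]
    rw [show ∑ j ∈ range (S + 1), q ^ (m * j) * CqZ q k m ((S:ℤ) - (j:ℤ)) ((T:ℤ) - ((j - (k - 1) : ℕ) : ℤ)) =
        ∑ j ∈ range (S + 1), q ^ (m * j) * CqZ q k m ((S:ℤ) - (j:ℤ)) (T:ℤ) from
      Finset.sum_congr rfl fun j hj => by
        rw [Finset.mem_range] at hj
        have h0 : j - (k - 1) = 0 := by omega
        rw [h0]; norm_num]
    apply Finset.sum_subset (Finset.range_subset_range.2 (by omega))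
    intro j hj hj2
    rw [Finset.mem_range] at hj hj2
    have : CqZ q k m ((S:ℤ) - (j:ℤ)) (T:ℤ) = 0 := by
      unfold CqZ
      rw [if_neg]
      rintro ⟨h1, -⟩
      omega
    rw [this, mul_zero]
end

section
/- For 0 < q ≤ 1 and integers r > 1, s ≥ 0, t ≥ 0, the quantity E_q^{k,ℓ}(r,s,t) satisfies E_q^{k,ℓ}(r,s,t) = Σ_{j=0}^{k-1} q^{(r-1)j} E_q^{k,ℓ}(r-1, s-j, t) + Σ_{j=k}^{s} q^{(r-1)j} E_q^{k,ℓ}(r-1, s-j, t - D(j)), where D(j) = ⌊(j-ℓ)/(k-ℓ)⌋ if j ≥ k and D(j) = 0 otherwise. -/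
open Finset

/-- `E_q^{k,ℓ}(r,s,t) = Σ q^(y₂+2y₃+⋯+(r-1)yᵣ)` over nonnegative tuples with
`Σ yᵢ = s` and `Σ D(yᵢ) = t`, where `D(j) = ⌊(j-ℓ)/(k-ℓ)⌋` for `j ≥ k`, else `0`. -/
def Eqsum (q : ℝ) (k l r s t : ℕ) : ℝ :=
  ∑ y ∈ (Fintype.piFinset fun _ : Fin r => Finset.range (s + 1)).filter
      (fun y => (∑ i, y i) = s ∧ (∑ i, if k ≤ y i then (y i - l) / (k - l) else 0) = t),
    q ^ (∑ i : Fin r, (i : ℕ) * y i)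

/-- `E_q^{k,ℓ}` with integer arguments, vanishing in degenerate (negative) cases. -/
def EqZ (q : ℝ) (k l r : ℕ) (s t : ℤ) : ℝ :=
  if 0 ≤ s ∧ 0 ≤ t then Eqsum q k l r s.toNat t.toNat else 0

def Dnat (k l j : ℕ) : ℕ := if k ≤ j then (j - l) / (k - l) else 0

lemma Eqsum_succ (q : ℝ) (k l m s t : ℕ) :
    Eqsum q k l (m + 1) s t =
      ∑ j ∈ Finset.range (s + 1),
        q ^ (m * j) *
          (if Dnat k l j ≤ t then Eqsum q k l m (s - j) (t - Dnat k l j) else 0) := by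
  classical
  rw [Eqsum,
    ← Finset.sum_fiberwise_of_maps_to (g := fun y => y (Fin.last m))
      (t := Finset.range (s + 1)) (fun y hy => by
        have := (Finset.mem_filter.mp hy).1
        exact Fintype.mem_piFinset.mp this (Fin.last m))]
  apply Finset.sum_congr rfl
  intro j hj
  have hjs : j ≤ s := Nat.lt_succ_iff.mp (Finset.mem_range.mp hj)
  by_cases hDt : Dnat k l j ≤ t
  · rw [if_pos hDt, Eqsum, Finset.mul_sum]
    refine Finset.sum_nbij' (i := fun y => Fin.init y) (j := fun z => Fin.snoc z j)
      ?_ ?_ ?_ ?_ ?_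
    · intro y hy
      simp only [Finset.mem_filter, Fintype.mem_piFinset, Finset.mem_range] at hy ⊢
      obtain ⟨⟨hmem, hsum, hdsum⟩, hlast⟩ := hy
      rw [Fin.sum_univ_castSucc] at hsum hdsum
      rw [hlast] at hsum hdsum
      refine ⟨?_, ?_, ?_⟩
      · intro i
        have : y (Fin.castSucc i) ≤ ∑ i : Fin m, y (Fin.castSucc i) :=
          Finset.single_le_sum (f := fun i => y (Fin.castSucc i)) (fun _ _ => Nat.zero_le _)
            (Finset.mem_univ i)
        simp only [Fin.init]
        omega
      · simp only [Fin.init]; omega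
      · simp only [Fin.init, Dnat] at *
        exact (Nat.sub_eq_of_eq_add hdsum.symm).symm
    · intro z hz
      simp only [Finset.mem_filter, Fintype.mem_piFinset, Finset.mem_range] at hz ⊢
      obtain ⟨hmem, hsum, hdsum⟩ := hz
      rw [Fin.sum_univ_castSucc, Fin.sum_univ_castSucc]
      simp only [Fin.snoc_castSucc, Fin.snoc_last]
      refine ⟨⟨fun i => ?_, ?_, ?_⟩, trivial⟩
      · refine Fin.lastCases ?_ (fun i => ?_) i
        · simp only [Fin.snoc_last]; omega
        · simp only [Fin.snoc_castSucc]; have := hmem i; omega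
      · omega
      · simp only [Dnat] at *; omega
    · intro y hy
      simp only [Finset.mem_filter] at hy
      show Fin.snoc (Fin.init y) j = y
      rw [← hy.2]
      exact Fin.snoc_init_self y
    · intro z _
      funext i
      simp [Fin.init]
    · intro y hy
      simp only [Finset.mem_filter] at hy
      have hlast : y (Fin.last m) = j := hy.2
      rw [Fin.sum_univ_castSucc, pow_add, Fin.val_last, hlast]
      simp only [Fin.init, Fin.coe_castSucc]
      ring
  · rw [if_neg hDt]
    rw [Finset.sum_eq_zero]
    · ring
    intro y hy
    exfalso
    simp only [Finset.mem_filter, Fintype.mem_piFinset, Finset.mem_range] at hy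
    obtain ⟨⟨hmem, hsum, hdsum⟩, hlast⟩ := hy
    rw [Fin.sum_univ_castSucc, hlast] at hdsum
    simp only [Dnat] at *
    omega

theorem Eq_recurrence (q : ℝ) (hq0 : 0 < q) (hq1 : q ≤ 1) (k l r : ℕ) (hl : l < k)
    (hr : 1 < r) (s t : ℤ) (hs : 0 ≤ s) (ht : 0 ≤ t) :
    EqZ q k l r s t =
      (∑ j ∈ Finset.range k, q ^ ((r - 1) * j) * EqZ q k l (r - 1) (s - j) t) +
      ∑ j ∈ Finset.Icc (k : ℤ) s,
        q ^ ((((r : ℤ) - 1) * j).toNat) *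
          EqZ q k l (r - 1) (s - j)
            (t - if (k : ℤ) ≤ j then (j - l) / ((k : ℤ) - l) else 0) := by
  classical
  obtain ⟨m, rfl⟩ : ∃ m, r = m + 1 := ⟨r - 1, by omega⟩
  have hm1 : m + 1 - 1 = m := by omega
  set S := s.toNat with hS
  set T := t.toNat with hT
  have hSs : (S : ℤ) = s := Int.toNat_of_nonneg hs
  have hTt : (T : ℤ) = t := Int.toNat_of_nonneg ht
  -- integer version of D agrees with Dnat
  have hD : ∀ j : ℕ, (if (k : ℤ) ≤ (j : ℤ) then ((j : ℤ) - l) / ((k : ℤ) - l) else 0)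
      = (Dnat k l j : ℤ) := by
    intro j
    unfold Dnat
    by_cases h : k ≤ j
    · rw [if_pos (by exact_mod_cast h), if_pos h]
      have h1 : ((j : ℤ) - l) = ((j - l : ℕ) : ℤ) := by omega
      have h2 : ((k : ℤ) - l) = ((k - l : ℕ) : ℤ) := by omega
      rw [h1, h2, Int.natCast_div]
    · rw [if_neg (by exact_mod_cast h), if_neg h]; simp
  -- exponent conversion
  have hexp : ∀ j : ℕ, ((((m + 1 : ℕ) : ℤ) - 1) * (j : ℤ)).toNat = m * j := by
    intro j
    have : (((m + 1 : ℕ) : ℤ) - 1) * (j : ℤ) = ((m * j : ℕ) : ℤ) := by push_cast; ring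
    rw [this, Int.toNat_natCast]
  set G : ℕ → ℝ := fun j =>
    q ^ ((((m + 1 : ℕ) : ℤ) - 1) * (j : ℤ)).toNat *
      EqZ q k l m (s - j)
        (t - if (k : ℤ) ≤ (j : ℤ) then ((j : ℤ) - l) / ((k : ℤ) - l) else 0) with hGdef
  have hG0 : ∀ j : ℕ, S < j → G j = 0 := by
    intro j hj
    simp only [hGdef, EqZ]
    rw [if_neg (by intro hcon; omega)]
    ring
  have key : ∀ j : ℕ, j ≤ S →
      q ^ (m * j) * (if Dnat k l j ≤ T then Eqsum q k l m (S - j) (T - Dnat k l j) else 0)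
        = G j := by
    intro j hj
    simp only [hGdef, hexp, hD, EqZ]
    by_cases hc : Dnat k l j ≤ T
    · rw [if_pos hc, if_pos (by constructor <;> omega)]
      congr 2
      · omega
      · omega
    · rw [if_neg hc, if_neg (by intro hcon; omega)]
  -- LHS as a nat-indexed sum
  have lhs_eq : EqZ q k l (m + 1) s t = ∑ j ∈ Finset.range (S + 1), G j := by
    rw [EqZ, if_pos ⟨hs, ht⟩, ← hS, ← hT, Eqsum_succ]
    exact Finset.sum_congr rfl fun j hj => key j (by
      have := Finset.mem_range.mp hj; omega)
  -- split the sum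
  have split : ∑ j ∈ Finset.range (S + 1), G j
      = ∑ j ∈ Finset.range k, G j + ∑ j ∈ Finset.Icc k S, G j := by
    by_cases hk : k ≤ S + 1
    · rw [Finset.range_eq_Ico, Finset.range_eq_Ico, ← Finset.Ico_add_one_right_eq_Icc,
        Finset.sum_Ico_consecutive G (Nat.zero_le k) hk]
    · rw [Finset.Icc_eq_empty (by omega), Finset.sum_empty, add_zero]
      apply Finset.sum_subset
      · intro x hx
        simp only [Finset.mem_range] at hx ⊢
        omega
      · intro x _ hx
        simp only [Finset.mem_range] at hx
        exact hG0 x (by omega)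
  rw [lhs_eq, split]
  congr 1
  · apply Finset.sum_congr rfl
    intro j hj
    have hjk : j < k := Finset.mem_range.mp hj
    simp only [hGdef, hexp, hm1]
    rw [if_neg (by exact_mod_cast Nat.not_le.mpr hjk), sub_zero]
  · -- reindex Icc k S over ℕ to Icc (k:ℤ) s over ℤ
    have himg : Finset.Icc (k : ℤ) s
        = (Finset.Icc k S).map ⟨(Nat.cast : ℕ → ℤ), Nat.cast_injective⟩ := by
      ext x
      simp only [Finset.mem_map, Finset.mem_Icc, Function.Embedding.coeFn_mk]
      constructor
      · rintro ⟨h1, h2⟩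
        exact ⟨x.toNat, by omega, by omega⟩
      · rintro ⟨n, ⟨h1, h2⟩, rfl⟩
        constructor <;> omega
    rw [himg, Finset.sum_map]
    apply Finset.sum_congr rfl
    intro j hj
    simp only [hGdef, hm1, Function.Embedding.coeFn_mk]
end

section
/- Let W be the waiting time for the r-th occurrence of an overlapping success run of length k (Type III counting) in a q-geometric sequence of binary trials. Then P(W = k+r-1) = θ^{k+r-1}, P(W = n) = 0 for n < k+r-1, and for n > k+r-1, P(W = n) = Σ_{t=k}^{k+r-1} Σ_i θ^{n-i} q^{it} (Π_{j=1}^{i}(1-θq^{j-1})) · C_q^k(i, n-t-i, r - C(t)), where C(t) = t-k+1 for t ≥ k and the inner sum is over the admissible range of the number of failures i. -/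
open Finset

/-- Probability of a finite binary word under the q-geometric model:
given `f` previous failures, a trial succeeds with probability `θ * q ^ f`. -/
def wordProb (θ q : ℝ) (w : List Bool) : ℝ :=
  (w.foldl
    (fun (pf : ℝ × ℕ) b =>
      if b then (pf.1 * (θ * q ^ pf.2), pf.2)
      else (pf.1 * (1 - θ * q ^ pf.2), pf.2 + 1))
    (1, 0)).1

/-- Lengths of the maximal runs of `true`s in a word (including the final, possibly
empty, ongoing run). -/
def oneRuns (w : List Bool) : List ℕ :=
  let p := w.foldl
    (fun (ac : List ℕ × ℕ) b => if b then (ac.1, ac.2 + 1) else (ac.2 :: ac.1, 0))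
    (([] : List ℕ), 0)
  p.2 :: p.1

/-- Type III (overlapping) count: a run of `m ≥ k` ones accounts for `m-k+1` runs. -/
def countIII (k : ℕ) (w : List Bool) : ℕ := ((oneRuns w).map (fun y => y - (k - 1))).sum

/-- Probability that the waiting time for the `r`-th occurrence (w.r.t. the counting
function `count`) equals `n`: the count reaches `r` at trial `n` and was `r-1` at `n-1`. -/
def probW (θ q : ℝ) (count : List Bool → ℕ) (r n : ℕ) : ℝ :=
  ∑ w : Fin n → Bool,
    if count (List.ofFn w) = r ∧ count ((List.ofFn w).take (n - 1)) = r - 1 then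
      wordProb θ q (List.ofFn w)
    else 0

/-! ### Auxiliary machinery -/

/-- word from runs: interior runs `L` (each followed by a failure) then final run `t`. -/
def wfr : List ℕ → ℕ → List Bool
  | [], t => List.replicate t true
  | y :: L, t => List.replicate y true ++ false :: wfr L t

lemma wfr_succ (L : List ℕ) (t : ℕ) : wfr L (t + 1) = wfr L t ++ [true] := by
  induction L with
  | nil => simp [wfr, List.replicate_succ' (n := t)]
  | cons y L ih => simp [wfr, ih]

lemma wfr_concat (L : List ℕ) (t : ℕ) : wfr (L ++ [t]) 0 = wfr L t ++ [false] := by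
  induction L with
  | nil => simp [wfr]
  | cons y L ih => simp [wfr, ih]

lemma length_wfr (L : List ℕ) (t : ℕ) : (wfr L t).length = L.sum + L.length + t := by
  induction L generalizing t with
  | nil => simp [wfr]
  | cons y L ih => simp [wfr, ih]; omega

lemma foldl_runs_aux (L : List ℕ) (t : ℕ) (acc : List ℕ) :
    List.foldl (fun (ac : List ℕ × ℕ) b => if b then (ac.1, ac.2 + 1) else (ac.2 :: ac.1, 0))
      (acc, 0) (wfr L t) = (L.reverse ++ acc, t) := by
  have hrep : ∀ (m c : ℕ) (a : List ℕ),
      List.foldl (fun (ac : List ℕ × ℕ) b => if b then (ac.1, ac.2 + 1) else (ac.2 :: ac.1, 0))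
        (a, c) (List.replicate m true) = (a, c + m) := by
    intro m
    induction m with
    | zero => intro c a; simp
    | succ m ih => intro c a; rw [List.replicate_succ]; simp [ih]; omega
  induction L generalizing acc with
  | nil => simpa [wfr] using hrep t 0 acc
  | cons y L ih =>
      simp only [wfr, List.foldl_append, List.foldl_cons, hrep]
      simp [ih]

lemma oneRuns_wfr (L : List ℕ) (t : ℕ) : oneRuns (wfr L t) = t :: L.reverse := by
  simp [oneRuns, foldl_runs_aux]

lemma oneRuns_ne_nil (w : List Bool) : oneRuns w ≠ [] := by simp [oneRuns]

/-- decomposition: every word is recovered from its runs. -/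
lemma wfr_oneRuns (w : List Bool) :
    wfr ((oneRuns w).tail.reverse) ((oneRuns w).headI) = w := by
  induction w using List.reverseRecOn with
  | nil => simp [oneRuns, wfr]
  | append_singleton w b ih =>
      cases b
      · have h : oneRuns (w ++ [false]) = 0 :: oneRuns w := by
          simp [oneRuns, List.foldl_append]
        rw [h]
        simp only [List.tail_cons, List.headI]
        obtain ⟨o, ho⟩ : ∃ o, oneRuns w = o := ⟨_, rfl⟩
        have hne := oneRuns_ne_nil w
        rw [ho] at hne ih ⊢
        match o, hne with
        | h₀ :: tl, _ =>
            simp only [List.headI, List.tail_cons] at ih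
            rw [show (h₀ :: tl).reverse = tl.reverse ++ [h₀] by simp]
            rw [wfr_concat, ih]
      · have h : oneRuns (w ++ [true]) = ((oneRuns w).headI + 1) :: (oneRuns w).tail := by
          obtain ⟨o, ho⟩ : ∃ o, oneRuns w = o := ⟨_, rfl⟩
          have hne := oneRuns_ne_nil w
          rw [ho] at hne ⊢
          match o, hne with
          | h₀ :: tl, _ =>
            simp only [oneRuns, List.foldl_append] at ho ⊢
            have h2 : (List.foldl (fun (ac : List ℕ × ℕ) b => if b then (ac.1, ac.2 + 1) else (ac.2 :: ac.1, 0))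
                (([] : List ℕ), 0) w) = (tl, h₀) := by
              have h3 := congrArg List.tail ho
              have h4 := congrArg List.headI ho
              simp at h3 h4
              exact Prod.ext h3 h4
            simp [h2]
        rw [h, List.tail_cons, List.headI, wfr_succ, ih]

def phi (θ q : ℝ) : ℕ → List ℕ → ℕ → ℝ
  | f, [], t => (θ * q ^ f) ^ t
  | f, y :: L, t => (θ * q ^ f) ^ y * (1 - θ * q ^ f) * phi θ q (f + 1) L t

lemma foldl_prob_wfr (θ q : ℝ) (L : List ℕ) (t : ℕ) (p : ℝ) (f : ℕ) :
    List.foldl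
      (fun (pf : ℝ × ℕ) b =>
        if b then (pf.1 * (θ * q ^ pf.2), pf.2)
        else (pf.1 * (1 - θ * q ^ pf.2), pf.2 + 1))
      (p, f) (wfr L t) = (p * phi θ q f L t, f + L.length) := by
  have hrep : ∀ (m : ℕ) (p : ℝ) (f : ℕ),
      List.foldl
        (fun (pf : ℝ × ℕ) b =>
          if b then (pf.1 * (θ * q ^ pf.2), pf.2)
          else (pf.1 * (1 - θ * q ^ pf.2), pf.2 + 1))
        (p, f) (List.replicate m true) = (p * (θ * q ^ f) ^ m, f) := by
    intro m
    induction m with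
    | zero => intro p f; simp
    | succ m ih => intro p f; rw [List.replicate_succ]; simp [ih, pow_succ]; ring
  induction L generalizing p f t with
  | nil => simp [wfr, phi, hrep]
  | cons y L ih =>
      simp only [wfr, phi, List.foldl_append, List.foldl_cons, hrep, if_neg, List.length_cons]
      simp [ih]
      constructor
      · ring
      · omega

lemma wordProb_wfr (θ q : ℝ) (L : List ℕ) (t : ℕ) :
    wordProb θ q (wfr L t) = phi θ q 0 L t := by
  simp [wordProb, foldl_prob_wfr]

/-- weight Σ j * L_j -/
def wt : List ℕ → ℕ
  | [] => 0
  | _ :: L => wt L + L.sum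

lemma phi_eq (θ q : ℝ) (L : List ℕ) (t f : ℕ) :
    phi θ q f L t = θ ^ (L.sum + t) * q ^ (f * (L.sum + t) + wt L + L.length * t) *
      ∏ j ∈ Finset.range L.length, (1 - θ * q ^ (f + j)) := by
  induction L generalizing f with
  | nil => simp [phi, wt, mul_pow, ← pow_mul, mul_comm]
  | cons y L ih =>
      rw [phi, ih]
      simp only [List.sum_cons, List.length_cons, wt]
      rw [Finset.prod_range_succ']
      have harr : ∀ j, f + 1 + j = f + (j + 1) := by omega
      simp only [harr, add_zero]
      rw [show y + L.sum + t = y + (L.sum + t) from by omega, pow_add θ]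
      rw [show f * (y + (L.sum + t)) + (wt L + L.sum) + (L.length + 1) * t
            = f * y + ((f + 1) * (L.sum + t) + wt L + L.length * t) from by ring, pow_add q]
      ring

lemma wt_ofFn (m : ℕ) (y : Fin m → ℕ) : wt (List.ofFn y) = ∑ i : Fin m, (i : ℕ) * y i := by
  induction m with
  | zero => simp [wt]
  | succ m ih =>
      rw [List.ofFn_succ, wt, ih, Fin.sum_univ_succ]
      simp only [List.sum_ofFn, Fin.val_succ, Fin.val_zero, zero_mul, zero_add]
      rw [← Finset.sum_add_distrib]
      apply Finset.sum_congr rfl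
      intro i _
      ring

lemma sum_get (M : List ℕ) : ∑ j : Fin M.length, M.get j = M.sum := by
  rw [← List.sum_ofFn]
  simp

lemma mapsum_get (f : ℕ → ℕ) (M : List ℕ) :
    (M.map f).sum = ∑ j : Fin M.length, f (M.get j) := by
  conv_lhs => rw [← List.ofFn_get M]
  rw [List.map_ofFn, List.sum_ofFn]
  rfl

lemma ofFn_getD_eq {α : Type*} (d : α) (l : List α) (n : ℕ) (h : l.length = n)
    (f : Fin n → α) (hf : ∀ j : Fin n, f j = l.getD j d) : List.ofFn f = l := by
  apply List.ext_getElem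
  · simp [h]
  · intro i h1 h2
    rw [List.getElem_ofFn]
    rw [hf]
    simp only [Fin.val_cast_of_lt]
    rw [List.getD_eq_getElem]

lemma countIII_wfr (k : ℕ) (L : List ℕ) (t : ℕ) :
    countIII k (wfr L t) = (t - (k - 1)) + (L.map (fun a => a - (k - 1))).sum := by
  rw [countIII, oneRuns_wfr]
  simp [List.sum_reverse]

lemma mapsum_sub_le (k : ℕ) (M : List ℕ) :
    (M.map (fun a => a - (k - 1))).sum ≤ M.sum := by
  induction M with
  | nil => simp
  | cons a M ih => simp only [List.map_cons, List.sum_cons]; omega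

lemma sum_le_mapsum (k : ℕ) (M : List ℕ) :
    M.sum ≤ M.length * (k - 1) + (M.map (fun a => a - (k - 1))).sum := by
  induction M with
  | nil => simp
  | cons a M ih =>
      simp only [List.map_cons, List.sum_cons, List.length_cons, Nat.succ_mul]
      omega

/-- Extraction of structural facts from the waiting-time condition. -/
lemma facts (k r n : ℕ) (hk : 0 < k) (hr : 0 < r) (w : List Bool) (hlen : w.length = n)
    (h1 : countIII k w = r) (h2 : countIII k (w.take (n - 1)) = r - 1) :
    k ≤ (oneRuns w).headI ∧ (oneRuns w).headI ≤ k + r - 1 ∧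
    ((oneRuns w).tail.reverse).sum + ((oneRuns w).tail.reverse).length
       + (oneRuns w).headI = n ∧
    (((oneRuns w).tail.reverse).map (fun a => a - (k - 1))).sum
       = r - ((oneRuns w).headI - (k - 1)) := by
  set t := (oneRuns w).headI with hT
  set M := (oneRuns w).tail.reverse with hM
  have hw : wfr M t = w := wfr_oneRuns w
  have hlen2 : M.sum + M.length + t = n := by rw [← hlen, ← hw, length_wfr]
  have hc1 : (t - (k - 1)) + (M.map (fun a => a - (k - 1))).sum = r := by
    rw [← countIII_wfr, hw]; exact h1
  clear_value t M
  rcases Nat.eq_zero_or_pos t with ht0 | htpos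
  · -- final run empty: the take condition fails
    exfalso
    rcases List.eq_nil_or_concat M with hM0 | ⟨M', t', hMc⟩
    · have : w = [] := by rw [← hw, hM0, ht0]; rfl
      rw [this] at h1
      simp [countIII, oneRuns] at h1
      omega
    · rw [List.concat_eq_append] at hMc
      have hw2 : w = wfr M' t' ++ [false] := by rw [← hw, hMc, ht0, wfr_concat]
      have hlen3 : n - 1 = (wfr M' t').length := by
        rw [← hlen, hw2]; simp
      have htake : w.take (n - 1) = wfr M' t' := by
        rw [hw2, hlen3, List.take_left]
      rw [htake, countIII_wfr] at h2
      rw [ht0, hMc] at hc1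
      simp only [List.map_append, List.sum_append, List.map_cons, List.map_nil,
        List.sum_cons, List.sum_nil] at hc1
      omega
  · -- final run nonempty
    obtain ⟨t'', rfl⟩ : ∃ t'', t = t'' + 1 := ⟨t - 1, by omega⟩
    have hw2 : w = wfr M t'' ++ [true] := by rw [← hw, wfr_succ]
    have hlen3 : n - 1 = (wfr M t'').length := by rw [← hlen, hw2]; simp
    have htake : w.take (n - 1) = wfr M t'' := by rw [hw2, hlen3, List.take_left]
    rw [htake, countIII_wfr] at h2
    refine ⟨?_, ?_, hlen2, ?_⟩ <;> omega

lemma sigma_mk_get (t i : ℕ) (y : Fin i → ℕ) :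
    (⟨⟨t, (List.ofFn y).length⟩, (List.ofFn y).get⟩ :
      (p : (_ : ℕ) × ℕ) × (Fin p.2 → ℕ)) = ⟨⟨t, i⟩, y⟩ := by
  have hl : (List.ofFn y).length = i := List.length_ofFn
  refine Sigma.ext ?_ ?_
  · simp [hl]
  · simp only
    rw [Fin.heq_fun_iff (by simp)]
    intro j
    rw [List.get_ofFn]
    rfl

def enc3 (t : ℕ) (M : List ℕ) : (p : (_ : ℕ) × ℕ) × (Fin p.2 → ℕ) :=
  ⟨⟨t, M.length⟩, fun j => M.get j⟩

def enc2 (o : List ℕ) : (p : (_ : ℕ) × ℕ) × (Fin p.2 → ℕ) :=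
  enc3 o.headI o.tail.reverse

lemma enc3_ofFn (t i : ℕ) (y : Fin i → ℕ) : enc3 t (List.ofFn y) = ⟨⟨t, i⟩, y⟩ :=
  sigma_mk_get t i y

theorem typeIII_q_negBinomial (θ q : ℝ) (hθ0 : 0 < θ) (hθ1 : θ ≤ 1)
    (hq0 : 0 < q) (hq1 : q < 1) (k r : ℕ) (hk : 0 < k) (hr : 0 < r) :
    (∀ n, n < k + r - 1 → probW θ q (countIII k) r n = 0) ∧
    probW θ q (countIII k) r (k + r - 1) = θ ^ (k + r - 1) ∧
    (∀ n, k + r - 1 < n →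
      probW θ q (countIII k) r n =
        ∑ t ∈ Finset.Icc k (k + r - 1),
          ∑ i ∈ Finset.Icc ((n - k - r) / k + 1) (n - (k + r - 1)),
            θ ^ (n - i) * q ^ (i * t) * (∏ j ∈ Finset.range i, (1 - θ * q ^ j)) *
              Cqsum q k i (n - t - i) (r - (t - (k - 1)))) := by
  have hsum : ∀ n, probW θ q (countIII k) r n =
      ∑ w ∈ (Finset.univ : Finset (Fin n → Bool)).filter
          (fun w => countIII k (List.ofFn w) = r ∧
            countIII k ((List.ofFn w).take (n - 1)) = r - 1),
        wordProb θ q (List.ofFn w) := by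
    intro n
    rw [probW, Finset.sum_filter]
  refine ⟨?_, ?_, ?_⟩
  · -- Part 1
    intro n hn
    rw [hsum]
    apply Finset.sum_eq_zero
    intro w hw
    exfalso
    rw [Finset.mem_filter] at hw
    obtain ⟨-, h1, h2⟩ := hw
    obtain ⟨F1, F2, F3, F4⟩ := facts k r n hk hr (List.ofFn w) (by simp) h1 h2
    have F5 := mapsum_sub_le k ((oneRuns (List.ofFn w)).tail.reverse)
    omega
  · -- Part 2
    rw [hsum]
    have hset : (Finset.univ : Finset (Fin (k + r - 1) → Bool)).filter
          (fun w => countIII k (List.ofFn w) = r ∧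
            countIII k ((List.ofFn w).take (k + r - 1 - 1)) = r - 1)
        = {fun _ => true} := by
      apply Finset.eq_singleton_iff_unique_mem.2
      constructor
      · rw [Finset.mem_filter]
        refine ⟨Finset.mem_univ _, ?_, ?_⟩
        · rw [List.ofFn_const, show List.replicate (k + r - 1) true = wfr [] (k + r - 1) from rfl,
            countIII_wfr]
          simp
          omega
        · rw [List.ofFn_const, List.take_replicate,
            show List.replicate (min (k + r - 1 - 1) (k + r - 1)) true
               = wfr [] (min (k + r - 1 - 1) (k + r - 1)) from rfl, countIII_wfr]
          simp
          omega
      · intro w hw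
        rw [Finset.mem_filter] at hw
        obtain ⟨-, h1, h2⟩ := hw
        obtain ⟨F1, F2, F3, F4⟩ := facts k r (k + r - 1) hk hr (List.ofFn w) (by simp) h1 h2
        have F5 := mapsum_sub_le k ((oneRuns (List.ofFn w)).tail.reverse)
        have hi0 : ((oneRuns (List.ofFn w)).tail.reverse).length = 0 := by omega
        have hM0 : (oneRuns (List.ofFn w)).tail.reverse = [] := List.length_eq_zero_iff.1 hi0
        have ht : (oneRuns (List.ofFn w)).headI = k + r - 1 := by
          rw [hM0] at F3; simpa using F3
        have hwd : List.ofFn w = List.replicate (k + r - 1) true := by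
          rw [← wfr_oneRuns (List.ofFn w), hM0, ht]; rfl
        funext j
        have := congrArg (fun l => l.getD (j : ℕ) false) hwd
        simpa [List.getD_eq_getElem, j.isLt, List.getElem_ofFn] using this
    rw [hset, Finset.sum_singleton, List.ofFn_const,
      show List.replicate (k + r - 1) true = wfr [] (k + r - 1) from rfl, wordProb_wfr]
    simp [phi]
  · -- Part 3
    intro n hn
    rw [hsum]
    simp only [Cqsum, Finset.mul_sum]
    rw [Finset.sum_sigma', Finset.sum_sigma']
    refine Finset.sum_bij'
      (fun w _ => enc2 (oneRuns (List.ofFn w)))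
      (fun p _ => fun j : Fin n => (wfr (List.ofFn p.2) p.1.1).getD (j : ℕ) false)
      ?_ ?_ ?_ ?_ ?_
    · -- hi : encode lands in the sigma set
      intro w hw
      dsimp only [enc2, enc3]
      rw [Finset.mem_filter] at hw
      obtain ⟨-, h1, h2⟩ := hw
      obtain ⟨F1, F2, F3, F4⟩ := facts k r n hk hr (List.ofFn w) (by simp) h1 h2
      set t := (oneRuns (List.ofFn w)).headI with hT
      set M := (oneRuns (List.ofFn w)).tail.reverse with hMd
      set i := M.length with hI
      have F5 := mapsum_sub_le k M
      have F6 : M.sum ≤ i * (k - 1) + (M.map (fun a => a - (k - 1))).sum :=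
        sum_le_mapsum k M
      have hik : i * k = i * (k - 1) + i := by
        rw [← Nat.mul_succ]; congr 1; omega
      rw [Finset.mem_sigma, Finset.mem_sigma, Finset.mem_Icc, Finset.mem_Icc]
      dsimp only
      refine ⟨⟨⟨F1, F2⟩, ?_, ?_⟩, ?_⟩
      · -- lower bound on i
        have hlow : n - k - r < i * k := by omega
        have := (Nat.div_lt_iff_lt_mul hk).2 hlow
        omega
      · -- upper bound on i
        omega
      · rw [Finset.mem_filter, Fintype.mem_piFinset]
        refine ⟨fun j => ?_, ?_, ?_⟩
        · rw [Finset.mem_range]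
          have hle : M.get j ≤ M.sum := by
            rw [← sum_get]
            exact Finset.single_le_sum (f := fun j => M.get j)
              (fun _ _ => Nat.zero_le _) (Finset.mem_univ j)
          omega
        · show (∑ j : Fin M.length, M.get j) = _
          rw [sum_get]; omega
        · show (∑ j : Fin M.length, (M.get j - (k - 1))) = _
          rw [mapsum_get (fun a => a - (k - 1)) M] at F4
          exact F4
    · -- hj : decode lands in the filter set
      intro p hp
      obtain ⟨⟨t, i⟩, y⟩ := p
      change Fin i → ℕ at y
      rw [Finset.mem_sigma, Finset.mem_sigma, Finset.mem_Icc, Finset.mem_Icc] at hp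
      dsimp only at hp ⊢
      obtain ⟨⟨⟨htk, htkr⟩, hil, hiu⟩, hy⟩ := hp
      rw [Finset.mem_filter] at hy
      obtain ⟨-, hys, hyc⟩ := hy
      have hti : t + i ≤ n := by omega
      have hlsum : (List.ofFn y).sum = n - t - i := by rw [List.sum_ofFn]; exact hys
      have hlen : (wfr (List.ofFn y) t).length = n := by
        rw [length_wfr, hlsum, List.length_ofFn]; omega
      have hofn : List.ofFn (fun j : Fin n => (wfr (List.ofFn y) t).getD (j : ℕ) false)
          = wfr (List.ofFn y) t := ofFn_getD_eq false _ n hlen _ (fun j => rfl)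
      have hmapsum : ((List.ofFn y).map (fun a => a - (k - 1))).sum = r - (t - (k - 1)) := by
        rw [List.map_ofFn, List.sum_ofFn]; exact hyc
      rw [Finset.mem_filter, hofn]
      refine ⟨Finset.mem_univ _, ?_, ?_⟩
      · rw [countIII_wfr, hmapsum]; omega
      · have ht1 : t = (t - 1) + 1 := by omega
        have htake : (wfr (List.ofFn y) t).take (n - 1) = wfr (List.ofFn y) (t - 1) := by
          conv_lhs => rw [ht1, wfr_succ]
          have : n - 1 = (wfr (List.ofFn y) (t - 1)).length := by
            rw [length_wfr, hlsum, List.length_ofFn]; omega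
          rw [this, List.take_left]
        rw [htake, countIII_wfr, hmapsum]
        omega
    · -- left inverse
      intro w hw
      dsimp only [enc2, enc3]
      funext j
      rw [List.ofFn_get, wfr_oneRuns]
      rw [List.getD_eq_getElem _ _ (by simp [j.isLt]), List.getElem_ofFn]
    · -- right inverse
      intro p hp
      obtain ⟨⟨t, i⟩, y⟩ := p
      change Fin i → ℕ at y
      rw [Finset.mem_sigma, Finset.mem_sigma, Finset.mem_Icc, Finset.mem_Icc] at hp
      dsimp only at hp
      obtain ⟨⟨⟨htk, htkr⟩, hil, hiu⟩, hy⟩ := hp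
      rw [Finset.mem_filter] at hy
      obtain ⟨-, hys, hyc⟩ := hy
      have hti : t + i ≤ n := by omega
      have hlsum : (List.ofFn y).sum = n - t - i := by rw [List.sum_ofFn]; exact hys
      have hlen : (wfr (List.ofFn y) t).length = n := by
        rw [length_wfr, hlsum, List.length_ofFn]; omega
      have hofn : List.ofFn (fun j : Fin n => (wfr (List.ofFn y) t).getD (j : ℕ) false)
          = wfr (List.ofFn y) t := ofFn_getD_eq false _ n hlen _ (fun j => rfl)
      dsimp only
      rw [hofn, oneRuns_wfr]
      show enc3 t ((List.ofFn y).reverse.reverse) = _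
      rw [List.reverse_reverse]
      exact enc3_ofFn t i y
    · -- values agree
      intro w hw
      rw [Finset.mem_filter] at hw
      obtain ⟨-, h1, h2⟩ := hw
      obtain ⟨F1, F2, F3, F4⟩ := facts k r n hk hr (List.ofFn w) (by simp) h1 h2
      dsimp only [enc2, enc3]
      conv_lhs => rw [← wfr_oneRuns (List.ofFn w)]
      rw [wordProb_wfr, phi_eq]
      have hwt : wt ((oneRuns (List.ofFn w)).tail.reverse)
          = ∑ j : Fin ((oneRuns (List.ofFn w)).tail.reverse).length,
              (j : ℕ) * ((oneRuns (List.ofFn w)).tail.reverse).get j := by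
        conv_lhs => rw [← List.ofFn_get ((oneRuns (List.ofFn w)).tail.reverse)]
        rw [wt_ofFn]
      have hnm : ((oneRuns (List.ofFn w)).tail.reverse).sum + (oneRuns (List.ofFn w)).headI
          = n - ((oneRuns (List.ofFn w)).tail.reverse).length := by omega
      rw [hwt, hnm, zero_mul, zero_add, pow_add]
      simp only [zero_add]
      generalize (q ^ ((oneRuns (List.ofFn w)).tail.reverse.length * (oneRuns (List.ofFn w)).headI)) = A
      simp only [mul_assoc, mul_comm, mul_left_comm]
      rfl
end

section
/- Let Z_n be the number of successes in n trials of the q-geometric model with P(X_j = 0 | F_{j-1} = i-1) = 1 - θq^{i-1}, where F_{j-1} is the number of failures among the first j-1 trials, 0 ≤ θ ≤ 1, 0 < q < 1. Then P(Z_n = r) = [n choose r]_q · θ^r · Π_{i=1}^{n-r}(1 - θq^{i-1}) for r = 0,1,...,n, where [n choose r]_q is the q-binomial coefficient. In particular these probabilities sum to 1 over r = 0,...,n, i.e. Σ_{r=0}^{n} [n choose r]_q θ^r Π_{i=1}^{n-r}(1 - θq^{i-1}) = 1. -/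
open Finset

/-- Probability that the number of successes among the `n` trials equals `r`. -/
def probZ (θ q : ℝ) (n r : ℕ) : ℝ :=
  ∑ w : Fin n → Bool,
    if (List.ofFn w).count true = r then wordProb θ q (List.ofFn w) else 0

/-- The `q`-binomial coefficient `[n choose r]_q = (q;q)_n / ((q;q)_r (q;q)_{n-r})`. -/
noncomputable def qbinom (q : ℝ) (n r : ℕ) : ℝ :=
  (∏ i ∈ Finset.range n, (1 - q ^ (i + 1))) /
    ((∏ i ∈ Finset.range r, (1 - q ^ (i + 1))) *
      (∏ i ∈ Finset.range (n - r), (1 - q ^ (i + 1))))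

lemma foldl_eq (q : ℝ) (w : List Bool) : ∀ (θ c : ℝ) (f : ℕ),
    (w.foldl (fun (pf : ℝ × ℕ) b =>
      if b then (pf.1 * (θ * q ^ pf.2), pf.2)
      else (pf.1 * (1 - θ * q ^ pf.2), pf.2 + 1)) (c, f)).1
    = c * wordProb (θ * q ^ f) q w := by
  induction w with
  | nil => intro θ c f; simp [wordProb]
  | cons b t ih =>
    intro θ c f
    cases b
    · simp only [List.foldl_cons, Bool.false_eq_true, if_false]
      rw [ih θ (c * (1 - θ * q ^ f)) (f + 1)]
      conv_rhs => rw [wordProb]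
      simp only [List.foldl_cons, Bool.false_eq_true, if_false]
      rw [ih (θ * q ^ f) (1 * (1 - θ * q ^ f * q ^ 0)) (0 + 1)]
      rw [show wordProb (θ * q ^ (f + 1)) q t = wordProb (θ * q ^ f * q ^ (0 + 1)) q t from by
        ring_nf]
      ring
    · simp only [List.foldl_cons, if_true]
      rw [ih θ (c * (θ * q ^ f)) f]
      conv_rhs => rw [wordProb]
      simp only [List.foldl_cons, if_true]
      rw [ih (θ * q ^ f) (1 * (θ * q ^ f * q ^ 0)) 0]
      rw [show wordProb (θ * q ^ f) q t = wordProb (θ * q ^ f * q ^ 0) q t from by ring_nf]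
      ring

lemma wordProb_cons (θ q : ℝ) (b : Bool) (w : List Bool) :
    wordProb θ q (b :: w) =
      if b then θ * wordProb θ q w else (1 - θ) * wordProb (θ * q) q w := by
  cases b
  · rw [wordProb]
    simp only [List.foldl_cons, Bool.false_eq_true, if_false]
    rw [foldl_eq q w θ (1 * (1 - θ * q ^ 0)) (0 + 1)]
    rw [show wordProb (θ * q ^ (0 + 1)) q w = wordProb (θ * q) q w from by ring_nf]
    ring
  · rw [wordProb]
    simp only [List.foldl_cons, if_true]
    rw [foldl_eq q w θ (1 * (θ * q ^ 0)) 0]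
    rw [show wordProb (θ * q ^ 0) q w = wordProb θ q w from by ring_nf]
    ring

lemma ofFn_cons (n : ℕ) (b : Bool) (g : Fin n → Bool) :
    List.ofFn (Fin.cons b g : Fin (n + 1) → Bool) = b :: List.ofFn g := by
  rw [List.ofFn_succ]
  simp

lemma consEquiv_pair (n : ℕ) (b : Bool) (g : Fin n → Bool) :
    (Fin.consEquiv (fun _ : Fin (n + 1) => Bool)) (b, g) = Fin.cons b g := rfl

lemma probZ_eq_zero (θ q : ℝ) {n r : ℕ} (h : n < r) : probZ θ q n r = 0 := by
  apply Finset.sum_eq_zero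
  intro w _
  rw [if_neg]
  intro hc
  have h1 := List.count_le_length (a := true) (l := List.ofFn w)
  rw [List.length_ofFn] at h1
  omega

lemma probZ_succ_zero (θ q : ℝ) (n : ℕ) :
    probZ θ q (n + 1) 0 = (1 - θ) * probZ (θ * q) q n 0 := by
  rw [probZ, ← (Fin.consEquiv (fun _ : Fin (n+1) => Bool)).sum_comp, Fintype.sum_prod_type,
    Fintype.sum_bool]
  simp only [consEquiv_pair, ofFn_cons, List.count_cons, wordProb_cons, if_true,
    Bool.false_eq_true, if_false, beq_self_eq_true, beq_iff_eq, add_zero]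
  rw [probZ, Finset.mul_sum]
  simp only [mul_ite, mul_zero]
  rw [show (∑ g : Fin n → Bool,
      if (List.ofFn g).count true + 1 = 0 then
        θ * wordProb θ q (List.ofFn g) else 0) = 0 from by
    apply Finset.sum_eq_zero; intro g _; rw [if_neg]; omega]
  rw [zero_add]

lemma probZ_succ_succ (θ q : ℝ) (n s : ℕ) :
    probZ θ q (n + 1) (s + 1) =
      θ * probZ θ q n s + (1 - θ) * probZ (θ * q) q n (s + 1) := by
  rw [probZ, ← (Fin.consEquiv (fun _ : Fin (n+1) => Bool)).sum_comp, Fintype.sum_prod_type,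
    Fintype.sum_bool]
  simp only [consEquiv_pair, ofFn_cons, List.count_cons, wordProb_cons, if_true,
    Bool.false_eq_true, if_false, beq_self_eq_true, beq_iff_eq, add_zero]
  rw [probZ, probZ, Finset.mul_sum, Finset.mul_sum]
  congr 1
  · apply Finset.sum_congr rfl
    intro g _
    simp only [mul_ite, mul_zero]
    congr 1
    simp only [eq_iff_iff]
    omega
  · simp only [mul_ite, mul_zero]

lemma sum_wordProb (q : ℝ) (n : ℕ) : ∀ θ : ℝ,
    (∑ w : Fin n → Bool, wordProb θ q (List.ofFn w)) = 1 := by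
  induction n with
  | zero => intro θ; simp [wordProb]
  | succ n ih =>
    intro θ
    rw [← (Fin.consEquiv (fun _ : Fin (n+1) => Bool)).sum_comp, Fintype.sum_prod_type,
      Fintype.sum_bool]
    simp only [consEquiv_pair, ofFn_cons, wordProb_cons, if_true, Bool.false_eq_true,
      if_false]
    rw [← Finset.mul_sum, ← Finset.mul_sum, ih θ, ih (θ * q)]
    ring

lemma prod_pos_ne (q : ℝ) (hq0 : 0 < q) (hq1 : q < 1) (k : ℕ) :
    (∏ i ∈ Finset.range k, (1 - q ^ (i + 1))) ≠ 0 := by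
  apply ne_of_gt
  apply Finset.prod_pos
  intro i _
  have : q ^ (i + 1) < 1 := pow_lt_one₀ hq0.le hq1 (Nat.succ_ne_zero i)
  linarith

lemma qbinom_zero (q : ℝ) (hq0 : 0 < q) (hq1 : q < 1) (n : ℕ) : qbinom q n 0 = 1 := by
  rw [qbinom]
  simp only [Finset.range_zero, Finset.prod_empty, Nat.sub_zero, one_mul]
  exact div_self (prod_pos_ne q hq0 hq1 n)

lemma qbinom_self (q : ℝ) (hq0 : 0 < q) (hq1 : q < 1) (n : ℕ) : qbinom q n n = 1 := by
  rw [qbinom]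
  simp only [Nat.sub_self, Finset.range_zero, Finset.prod_empty, mul_one]
  exact div_self (prod_pos_ne q hq0 hq1 n)

lemma qPascal (q : ℝ) (hq0 : 0 < q) (hq1 : q < 1) (s n : ℕ) (h : s + 1 ≤ n) :
    qbinom q (n + 1) (s + 1) = qbinom q n s + q ^ (s + 1) * qbinom q n (s + 1) := by
  obtain ⟨m, rfl⟩ := Nat.exists_eq_add_of_le h
  unfold qbinom
  rw [show s + 1 + m + 1 - (s + 1) = m + 1 from by omega,
    show s + 1 + m - s = m + 1 from by omega,
    show s + 1 + m - (s + 1) = m from by omega,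
    show s + 1 + m + 1 = (s + 1 + m) + 1 from rfl,
    Finset.prod_range_succ (fun i => (1 - q ^ (i + 1))) (s + 1 + m),
    Finset.prod_range_succ (fun i => (1 - q ^ (i + 1))) s,
    Finset.prod_range_succ (fun i => (1 - q ^ (i + 1))) m]
  have ha := prod_pos_ne q hq0 hq1 (s + 1 + m)
  have hb := prod_pos_ne q hq0 hq1 s
  have hc := prod_pos_ne q hq0 hq1 m
  have hx : (1 : ℝ) - q ^ (s + 1) ≠ 0 := by
    have : q ^ (s + 1) < 1 := pow_lt_one₀ hq0.le hq1 (Nat.succ_ne_zero s)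
    intro hh; linarith
  have hy : (1 : ℝ) - q ^ (m + 1) ≠ 0 := by
    have : q ^ (m + 1) < 1 := pow_lt_one₀ hq0.le hq1 (Nat.succ_ne_zero m)
    intro hh; linarith
  field_simp
  ring

lemma key (q : ℝ) (hq0 : 0 < q) (hq1 : q < 1) :
    ∀ (n : ℕ) (θ : ℝ) (r : ℕ), r ≤ n →
      probZ θ q n r = qbinom q n r * θ ^ r * ∏ i ∈ Finset.range (n - r), (1 - θ * q ^ i) := by
  intro n
  induction n with
  | zero =>
    intro θ r hr
    interval_cases r
    rw [qbinom_zero q hq0 hq1]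
    simp [probZ, wordProb]
  | succ n ih =>
    intro θ r hr
    match r with
    | 0 =>
      rw [probZ_succ_zero, ih (θ * q) 0 (Nat.zero_le _), qbinom_zero q hq0 hq1,
        qbinom_zero q hq0 hq1]
      simp only [pow_zero, Nat.sub_zero, one_mul, mul_one]
      rw [Finset.prod_range_succ' (fun i => (1 - θ * q ^ i)) n]
      simp only [pow_zero, mul_one]
      rw [show (∏ i ∈ Finset.range n, (1 - θ * q ^ (i + 1)))
          = ∏ i ∈ Finset.range n, (1 - θ * q * q ^ i) from by
        apply Finset.prod_congr rfl; intro i _; ring]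
      ring
    | (s + 1) =>
      rcases Nat.lt_or_ge s n with hs | hs
      · -- s + 1 ≤ n
        have hs' : s + 1 ≤ n := hs
        rw [probZ_succ_succ, ih θ s (by omega), ih (θ * q) (s + 1) hs',
          qPascal q hq0 hq1 s n hs']
        rw [show n + 1 - (s + 1) = n - s from by omega]
        have hm : n - s = (n - (s + 1)) + 1 := by omega
        rw [hm]
        rw [Finset.prod_range_succ' (fun i => (1 - θ * q ^ i)) (n - (s + 1))]
        simp only [pow_zero, mul_one]
        rw [show (∏ i ∈ Finset.range (n - (s + 1)), (1 - θ * q * q ^ i))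
            = ∏ i ∈ Finset.range (n - (s + 1)), (1 - θ * q ^ (i + 1)) from by
          apply Finset.prod_congr rfl; intro i _; ring]
        ring
      · -- s = n
        have hsn : s = n := by omega
        subst hsn
        rw [probZ_succ_succ, ih θ s le_rfl, probZ_eq_zero (θ * q) q (by omega),
          qbinom_self q hq0 hq1, qbinom_self q hq0 hq1]
        simp only [Nat.sub_self, Finset.range_zero, Finset.prod_empty, mul_one, one_mul]
        ring

theorem q_binomial_distribution (θ q : ℝ) (hθ0 : 0 ≤ θ) (hθ1 : θ ≤ 1)
    (hq0 : 0 < q) (hq1 : q < 1) (n : ℕ) :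
    (∀ r ≤ n, probZ θ q n r =
      qbinom q n r * θ ^ r * ∏ i ∈ Finset.range (n - r), (1 - θ * q ^ i)) ∧
    (∑ r ∈ Finset.range (n + 1),
      qbinom q n r * θ ^ r * ∏ i ∈ Finset.range (n - r), (1 - θ * q ^ i)) = 1 := by
  constructor
  · intro r hr
    exact key q hq0 hq1 n θ r hr
  · rw [show (∑ r ∈ Finset.range (n + 1),
        qbinom q n r * θ ^ r * ∏ i ∈ Finset.range (n - r), (1 - θ * q ^ i))
        = ∑ r ∈ Finset.range (n + 1), probZ θ q n r from by
      apply Finset.sum_congr rfl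
      intro r hr
      exact (key q hq0 hq1 n θ r (by simpa using Nat.lt_succ_iff.mp (Finset.mem_range.mp hr))).symm]
    simp only [probZ]
    rw [Finset.sum_comm]
    rw [show (∑ w : Fin n → Bool, ∑ r ∈ Finset.range (n + 1),
        if (List.ofFn w).count true = r then wordProb θ q (List.ofFn w) else 0)
        = ∑ w : Fin n → Bool, wordProb θ q (List.ofFn w) from by
      apply Finset.sum_congr rfl
      intro w _
      rw [Finset.sum_ite_eq (Finset.range (n + 1)) ((List.ofFn w).count true)
        (fun _ => wordProb θ q (List.ofFn w)), if_pos]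
      rw [Finset.mem_range]
      have h1 := List.count_le_length (a := true) (l := List.ofFn w)
      rw [List.length_ofFn] at h1
      omega]
    exact sum_wordProb q n θ
end
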